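/- arXiv:1811.04800 — 4 statements merged into one kernel-verified Lean document; each statement's English description precedes it below -/
import Mathlib

section
/- A standard rule r of the form A ← B, ¬C, ¬¬D (with A, B, C, D sets of atoms) is tautological if and only if (α) A ∩ B ≠ ∅, or (β) B ∩ C ≠ ∅, or (γ) C ∩ D ≠ ∅. -/
variable {V : Type}

/-- A (default-negation) literal: an atom or its default negation. -/
inductive Lit (V : Type) : Type
  | pos (a : V) : Lit V
  | neg (a : V) : Lit V

namespace Lit

/-- `I ⊨ ℓ`. -/
def sat (I : Set V) : Lit V → Prop
  | pos a => a ∈ I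
  | neg a => a ∉ I

/-- The complementary literal (so that `I ⊨ ¬ℓ` iff `I ⊨ ℓ.flip`). -/
def flip : Lit V → Lit V
  | pos a => neg a
  | neg a => pos a

/-- The underlying atom of a literal. -/
def atom : Lit V → V
  | pos a => a
  | neg a => a

end Lit

/-- A standard (ASP) rule `head ← pos, {¬ℓ | ℓ ∈ neg}`; the set `neg` collects the
literals occurring under one extra default negation in the body (so an atom `a ∈ pos`
is a positive body atom, `Lit.pos c ∈ neg` encodes the body element `¬c`, and
`Lit.neg d ∈ neg` encodes the doubly negated body element `¬¬d`). -/
structure Rule (V : Type) : Type where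
  head : Set V
  pos : Set V
  neg : Set (Lit V)

namespace Rule

/-- The rule only uses atoms from `A`. -/
def wf (r : Rule V) (A : Set V) : Prop :=
  r.head ⊆ A ∧ r.pos ⊆ A ∧ ∀ ℓ ∈ r.neg, ℓ.atom ∈ A

/-- `I` is a model of the rule. -/
def sat (I : Set V) (r : Rule V) : Prop :=
  (r.pos ⊆ I ∧ ∀ ℓ ∈ r.neg, ¬ ℓ.sat I) → ∃ a ∈ r.head, a ∈ I

/-- `X` satisfies the GL-reduct of the rule w.r.t. `Y`: if the rule survives the
reduct (no negated body literal is satisfied by `Y`), then `X` satisfies the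
remaining rule `head ← pos`. -/
def redSat (Y X : Set V) (r : Rule V) : Prop :=
  (∀ ℓ ∈ r.neg, ¬ ℓ.sat Y) → (r.pos ⊆ X → ∃ a ∈ r.head, a ∈ X)

end Rule

/-- A ground logic program `(𝒜, ℛ)`. -/
structure Program (V : Type) : Type where
  A : Set V
  R : Set (Rule V)

namespace Program

def wf (P : Program V) : Prop := ∀ r ∈ P.R, r.wf P.A

/-- `I ⊨ P`. -/
def model (P : Program V) (I : Set V) : Prop := ∀ r ∈ P.R, r.sat I

/-- `X ⊨ P^Y` (the GL-reduct). -/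
def redModel (P : Program V) (Y X : Set V) : Prop := ∀ r ∈ P.R, r.redSat Y X

/-- `M` is an answer set of `P`. -/
def answerSet (P : Program V) (M : Set V) : Prop :=
  M ⊆ P.A ∧ P.model M ∧ ¬ ∃ M', M' ⊂ M ∧ P.redModel M M'

/-- `AS(P)`, the set of answer sets. -/
def AS (P : Program V) : Set (Set V) := {M | P.answerSet M}

/-- The set of SE-models `(X,Y)` with `X ⊆ Y ⊆ 𝒜`, `Y ⊨ P` and `X ⊨ P^Y`. -/
def SE (P : Program V) : Set (Set V × Set V) :=
  {p | p.1 ⊆ p.2 ∧ p.2 ⊆ P.A ∧ P.model p.2 ∧ P.redModel p.2 p.1}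

/-- Componentwise union of programs. -/
def union (P₁ P₂ : Program V) : Program V := ⟨P₁.A ∪ P₂.A, P₁.R ∪ P₂.R⟩

/-- Strong equivalence of plain logic programs. -/
def strongEq (P₁ P₂ : Program V) : Prop :=
  ∀ P : Program V, P.wf → (P₁.union P).AS = (P₂.union P).AS

end Program

/-- An ELP rule `head ← opos, ¬oneg, not epos, ¬ not eneg`: epistemic literals `not ℓ`
are identified with the literal `ℓ` they negate; `epos` collects the literals occurring
under plain epistemic negation and `eneg` those occurring under default-negated
epistemic negation. -/
structure ERule (V : Type) : Type where
  head : Set V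
  opos : Set V
  oneg : Set (Lit V)
  epos : Set (Lit V)
  eneg : Set (Lit V)

namespace ERule

/-- The rule only uses atoms from `A` and epistemic literals from `E`. -/
def wf (r : ERule V) (A : Set V) (E : Set (Lit V)) : Prop :=
  r.head ⊆ A ∧ r.opos ⊆ A ∧ (∀ ℓ ∈ r.oneg, ℓ.atom ∈ A) ∧ r.epos ⊆ E ∧ r.eneg ⊆ E

/-- The rule of the epistemic reduct w.r.t. guess `Φ` (meaningful when no `eneg`
literal belongs to `Φ`, in which case: epistemic literals `not ℓ ∈ Φ` become `⊤`,
the remaining `not ℓ` in `epos` become `¬ℓ`, and `¬ not ℓ` in `eneg` becomes `¬¬ℓ`,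
i.e. `¬(ℓ.flip)`, reading triple negations as single ones). -/
def reduct (r : ERule V) (Φ : Set (Lit V)) : Rule V :=
  ⟨r.head, r.opos, r.oneg ∪ (r.epos \ Φ) ∪ (Lit.flip '' r.eneg)⟩

/-- The underlying plain rule of an epistemic-negation-free ELP rule. -/
def toRule (r : ERule V) : Rule V := ⟨r.head, r.opos, r.oneg⟩

end ERule

/-- A plain rule viewed as an ELP rule. -/
def Rule.toERule (r : Rule V) : ERule V := ⟨r.head, r.pos, r.neg, ∅, ∅⟩

/-- An epistemic logic program `(𝒜, ℰ, ℛ)`. -/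
structure ELP (V : Type) : Type where
  A : Set V
  E : Set (Lit V)
  R : Set (ERule V)

/-- `I` is `Φ`-compatible w.r.t. `E`. -/
def compatible (E Φ : Set (Lit V)) (I : Set (Set V)) : Prop :=
  I.Nonempty ∧ (∀ ℓ ∈ Φ, ∃ J ∈ I, ¬ ℓ.sat J) ∧ (∀ ℓ ∈ E \ Φ, ∀ J ∈ I, ℓ.sat J)

/-- `Φ` is realizable in the set `I` of interpretations (w.r.t. `E`). -/
def realizableIn (E Φ : Set (Lit V)) (I : Set (Set V)) : Prop :=
  ∃ I', I' ⊆ I ∧ compatible E Φ I'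

/-- A guess `Φ` is consistent w.r.t. `E`: whenever `E` contains both `not a` and
`not ¬a`, `Φ` contains at least one of them. -/
def consistentGuess (E Φ : Set (Lit V)) : Prop :=
  ∀ a : V, Lit.pos a ∈ E → Lit.neg a ∈ E → (Lit.pos a ∈ Φ ∨ Lit.neg a ∈ Φ)

namespace ELP

/-- Well-formedness: `E` consists of epistemic literals over `A`, and every rule is
over `A` and `E`. -/
def wf (P : ELP V) : Prop :=
  (∀ ℓ ∈ P.E, ℓ.atom ∈ P.A) ∧ ∀ r ∈ P.R, r.wf P.A P.E

/-- An epistemic-negation-free (plain ASP) program viewed as an ELP. -/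
def isASP (P : ELP V) : Prop := P.E = ∅ ∧ ∀ r ∈ P.R, r.epos = ∅ ∧ r.eneg = ∅

/-- Componentwise union of ELPs. -/
def union (P₁ P₂ : ELP V) : ELP V := ⟨P₁.A ∪ P₂.A, P₁.E ∪ P₂.E, P₁.R ∪ P₂.R⟩

/-- The epistemic reduct `P^Φ`: rules with some `eneg` literal in `Φ` are deleted
(their body contains `¬⊤`), the remaining rules are reduced. -/
def eReduct (P : ELP V) (Φ : Set (Lit V)) : Program V :=
  ⟨P.A, {q | ∃ r ∈ P.R, (∀ ℓ ∈ r.eneg, ℓ ∉ Φ) ∧ q = r.reduct Φ}⟩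

/-- `M` is a candidate world view of `P` w.r.t. the guess `Φ`. -/
def isCWVwrt (P : ELP V) (Φ : Set (Lit V)) (M : Set (Set V)) : Prop :=
  Φ ⊆ P.E ∧ M = (P.eReduct Φ).AS ∧ compatible P.E Φ M

/-- `M` is a candidate world view of `P`. -/
def isCWV (P : ELP V) (M : Set (Set V)) : Prop := ∃ Φ, P.isCWVwrt Φ M

/-- `M` is a world view of `P`: a CWV whose associated guess is subset-maximal. -/
def isWV (P : ELP V) (M : Set (Set V)) : Prop :=
  ∃ Φ, P.isCWVwrt Φ M ∧ ∀ Φ' M', P.isCWVwrt Φ' M' → ¬ Φ ⊂ Φ'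

/-- `Φ` is realizable in `P`: realizable in the set of models of `P^Φ`. -/
def realizable (P : ELP V) (Φ : Set (Lit V)) : Prop :=
  realizableIn P.E Φ {I | I ⊆ P.A ∧ (P.eReduct Φ).model I}

/-- The SE-function of `P`: `SE(Π^Φ)` if `Φ` is realizable in `P`, and `∅` otherwise. -/
def SEfun (P : ELP V) (Φ : Set (Lit V)) : Set (Set V × Set V) :=
  {p | P.realizable Φ ∧ p ∈ (P.eReduct Φ).SE}

/-- CWV-equivalence. -/
def cwvEq (P₁ P₂ : ELP V) : Prop := ∀ M, P₁.isCWV M ↔ P₂.isCWV M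

/-- WV-equivalence. -/
def wvEq (P₁ P₂ : ELP V) : Prop := ∀ M, P₁.isWV M ↔ P₂.isWV M

/-- Strong ELP-CWV-equivalence. -/
def strongELPCWVEq (P₁ P₂ : ELP V) : Prop :=
  ∀ Q : ELP V, Q.wf → cwvEq (P₁.union Q) (P₂.union Q)

/-- Strong ELP-WV-equivalence. -/
def strongELPWVEq (P₁ P₂ : ELP V) : Prop :=
  ∀ Q : ELP V, Q.wf → wvEq (P₁.union Q) (P₂.union Q)

/-- Strong ASP-CWV-equivalence. -/
def strongASPCWVEq (P₁ P₂ : ELP V) : Prop :=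
  ∀ Q : ELP V, Q.wf → Q.isASP → cwvEq (P₁.union Q) (P₂.union Q)

/-- Strong ASP-WV-equivalence. -/
def strongASPWVEq (P₁ P₂ : ELP V) : Prop :=
  ∀ Q : ELP V, Q.wf → Q.isASP → wvEq (P₁.union Q) (P₂.union Q)

end ELP

/-- The Gelfond-CWA program `p' ← ¬ not ¬p` over `𝒜 = {p, p'}`, `ℰ = {not p, not ¬p}`. -/
def GelfondCWA (p p' : V) : ELP V :=
  ⟨{p, p'}, {Lit.pos p, Lit.neg p}, {⟨{p'}, ∅, ∅, ∅, {Lit.neg p}⟩}⟩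

/-- The Shen-Eiter-CWA program `p' ← not p` over `𝒜 = {p, p'}`, `ℰ = {not p, not ¬p}`. -/
def ShenEiterCWA (p p' : V) : ELP V :=
  ⟨{p, p'}, {Lit.pos p, Lit.neg p}, {⟨{p'}, ∅, ∅, {Lit.pos p}, ∅⟩}⟩

section StmtThirteenAux

variable {V : Type}

lemma negsat_iff (C D I : Set V) :
    (∀ ℓ ∈ (Lit.pos '' C ∪ Lit.neg '' D), ¬ ℓ.sat I) ↔
      ((∀ c ∈ C, c ∉ I) ∧ ∀ d ∈ D, d ∈ I) := by
  constructor
  · intro h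
    refine ⟨fun c hc => h _ (Or.inl ⟨c, hc, rfl⟩), fun d hd => ?_⟩
    have := h _ (Or.inr ⟨d, hd, rfl⟩)
    simpa [Lit.sat] using this
  · rintro ⟨h1, h2⟩ ℓ hl
    rcases hl with ⟨c, hc, rfl⟩ | ⟨d, hd, rfl⟩
    · exact h1 c hc
    · simp only [Lit.sat, not_not]
      exact h2 d hd

lemma AS_union_taut (r : Rule V) (𝒜 : Set V)
    (hsat : ∀ I, r.sat I) (hred : ∀ Y X : Set V, X ⊂ Y → r.redSat Y X) (P : Program V) :
    ((Program.mk 𝒜 {r}).union P).AS = ((Program.mk 𝒜 ∅).union P).AS := by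
  ext M
  simp only [Program.AS, Set.mem_setOf_eq, Program.answerSet, Program.union,
    Program.model, Program.redModel, Set.empty_union, Set.mem_union,
    Set.mem_singleton_iff]
  constructor
  · rintro ⟨h1, h2, h3⟩
    refine ⟨h1, fun q hq => h2 q (Or.inr hq), ?_⟩
    rintro ⟨M', hss, hm⟩
    refine h3 ⟨M', hss, ?_⟩
    rintro q (rfl | hq)
    · exact hred M M' hss
    · exact hm q hq
  · rintro ⟨h1, h2, h3⟩
    refine ⟨h1, ?_, ?_⟩
    · rintro q (rfl | hq)
      · exact hsat M
      · exact h2 q hq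
    · rintro ⟨M', hss, hm⟩
      exact h3 ⟨M', hss, fun q hq => hm q (Or.inr hq)⟩

end StmtThirteenAux

/-- A standard rule `A ← B, ¬C, ¬¬D` is tautological iff
`A ∩ B ≠ ∅`, `B ∩ C ≠ ∅`, or `C ∩ D ≠ ∅`. -/
theorem stmt13 {V : Type} (𝒜 A B C D : Set V)
    (hA : A ⊆ 𝒜) (hB : B ⊆ 𝒜) (hC : C ⊆ 𝒜) (hD : D ⊆ 𝒜) :
    Program.strongEq
        (Program.mk 𝒜 {Rule.mk A B (Lit.pos '' C ∪ Lit.neg '' D)})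
        (Program.mk 𝒜 ∅) ↔
      ((A ∩ B).Nonempty ∨ (B ∩ C).Nonempty ∨ (C ∩ D).Nonempty) := by
  set r : Rule V := Rule.mk A B (Lit.pos '' C ∪ Lit.neg '' D) with hr
  constructor
  · -- contrapositive: if all three intersections are empty, not strongly equivalent
    intro hse
    by_contra hno
    push_neg at hno
    obtain ⟨hAB0, hBC0, hCD0⟩ := hno
    have hAB : ∀ x, x ∈ A → x ∉ B := fun x hx hx' =>
      Set.eq_empty_iff_forall_notMem.mp hAB0 x ⟨hx, hx'⟩
    have hBC : ∀ x, x ∈ B → x ∉ C := fun x hx hx' =>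
      Set.eq_empty_iff_forall_notMem.mp hBC0 x ⟨hx, hx'⟩
    have hCD : ∀ x, x ∈ C → x ∉ D := fun x hx hx' =>
      Set.eq_empty_iff_forall_notMem.mp hCD0 x ⟨hx, hx'⟩
    -- Y := B ∪ D satisfies the negated body parts of r
    have hnegY : ∀ ℓ ∈ r.neg, ¬ ℓ.sat (B ∪ D) := by
      rw [hr]
      rw [show (Rule.mk A B (Lit.pos '' C ∪ Lit.neg '' D)).neg = Lit.pos '' C ∪ Lit.neg '' D from rfl]
      rw [negsat_iff]
      exact ⟨fun c hc hcY => hcY.elim (fun h => hBC c h hc) (fun h => hCD c hc h),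
        fun d hd => Or.inr hd⟩
    by_cases hc : ∃ a, a ∈ A ∧ a ∈ B ∪ D
    · -- case 2: Y ⊨ r; context: facts B plus p ← q for p,q ∈ (B∪D)\B
      obtain ⟨a, haA, haY⟩ := hc
      have haB : a ∉ B := hAB a haA
      have haD : a ∈ D := haY.resolve_left haB
      set P : Program V :=
        ⟨𝒜, {q | ∃ x ∈ B, q = Rule.mk {x} ∅ ∅} ∪
             {q | ∃ p ∈ (B ∪ D) \ B, ∃ u ∈ (B ∪ D) \ B, q = Rule.mk {p} {u} ∅}⟩ with hP
      have hPwf : P.wf := by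
        rintro q (⟨x, hx, rfl⟩ | ⟨p, hp, u, hu, rfl⟩)
        · exact ⟨Set.singleton_subset_iff.mpr (hB hx), Set.empty_subset _,
            fun ℓ h => absurd h (Set.notMem_empty ℓ)⟩
        · refine ⟨Set.singleton_subset_iff.mpr ?_, Set.singleton_subset_iff.mpr ?_,
            fun ℓ h => absurd h (Set.notMem_empty ℓ)⟩
          · exact hp.1.elim (fun h => hB h) (fun h => hD h)
          · exact hu.1.elim (fun h => hB h) (fun h => hD h)
      have heq := Set.ext_iff.mp (hse P hPwf) (B ∪ D)
      have hYsub : B ∪ D ⊆ 𝒜 ∪ P.A := fun x hx =>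
        Or.inl (hx.elim (fun h => hB h) (fun h => hD h))
      -- B ∪ D is an answer set of Π_r ∪ P
      have hmem1 : (B ∪ D) ∈ ((Program.mk 𝒜 {r}).union P).AS := by
        refine ⟨hYsub, ?_, ?_⟩
        · rintro q (hq | (⟨x, hx, rfl⟩ | ⟨p, hp, u, hu, rfl⟩))
          · rw [Set.mem_singleton_iff] at hq
            subst hq
            intro _
            exact ⟨a, haA, Or.inr haD⟩
          · intro _
            exact ⟨x, Set.mem_singleton x, Or.inl hx⟩
          · intro _
            exact ⟨p, Set.mem_singleton p, hp.1⟩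
        · rintro ⟨M', hss, hm⟩
          have hBM' : B ⊆ M' := by
            intro x hx
            obtain ⟨b, hb, hb'⟩ := hm (Rule.mk {x} ∅ ∅) (Or.inr (Or.inl ⟨x, hx, rfl⟩))
              (fun ℓ h => absurd h (Set.notMem_empty ℓ)) (Set.empty_subset _)
            rwa [Set.eq_of_mem_singleton hb] at hb'
          by_cases hu : ∃ u, u ∈ M' ∧ u ∈ (B ∪ D) \ B
          · obtain ⟨u, huM, huY⟩ := hu
            refine hss.not_subset ?_
            intro p hp
            by_cases hpB : p ∈ B
            · exact hBM' hpB
            · obtain ⟨b, hb, hb'⟩ := hm (Rule.mk {p} {u} ∅)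
                (Or.inr (Or.inr ⟨p, ⟨hp, hpB⟩, u, huY, rfl⟩))
                (fun ℓ h => absurd h (Set.notMem_empty ℓ))
                (Set.singleton_subset_iff.mpr huM)
              rwa [Set.eq_of_mem_singleton hb] at hb'
          · push_neg at hu
            have hM'B : M' ⊆ B := fun x hx => by
              by_contra hxB
              exact hu x hx ⟨hss.1 hx, hxB⟩
            obtain ⟨b, hbA, hbM'⟩ := hm r (Or.inl (Set.mem_singleton r)) hnegY hBM'
            exact hAB b hbA (hM'B hbM')
      -- but B ∪ D is not an answer set of ∅ ∪ P : B is a proper reduct-submodel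
      have hmem2 : (B ∪ D) ∉ ((Program.mk 𝒜 ∅).union P).AS := by
        rintro ⟨-, -, h3⟩
        refine h3 ⟨B, ⟨Set.subset_union_left, fun hsub => haB (hsub (Or.inr haD))⟩, ?_⟩
        rintro q (hq | (⟨x, hx, rfl⟩ | ⟨p, hp, u, hu, rfl⟩))
        · exact absurd hq (Set.notMem_empty q)
        · exact fun _ _ => ⟨x, Set.mem_singleton x, hx⟩
        · intro _ hsub
          exact absurd (hsub (Set.mem_singleton u)) hu.2
      exact hmem2 (heq.mp hmem1)
    · -- case 1: Y ⊭ r; context: facts B ∪ D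
      push_neg at hc
      set P : Program V := ⟨𝒜, {q | ∃ y ∈ B ∪ D, q = Rule.mk {y} ∅ ∅}⟩ with hP
      have hPwf : P.wf := by
        rintro q ⟨y, hy, rfl⟩
        exact ⟨Set.singleton_subset_iff.mpr (hy.elim (fun h => hB h) (fun h => hD h)),
          Set.empty_subset _, fun ℓ h => absurd h (Set.notMem_empty ℓ)⟩
      have heq := Set.ext_iff.mp (hse P hPwf) (B ∪ D)
      have hmem2 : (B ∪ D) ∈ ((Program.mk 𝒜 ∅).union P).AS := by
        refine ⟨fun x hx => Or.inl (hx.elim (fun h => hB h) (fun h => hD h)), ?_, ?_⟩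
        · rintro q (hq | ⟨y, hy, rfl⟩)
          · exact absurd hq (Set.notMem_empty q)
          · exact fun _ => ⟨y, Set.mem_singleton y, hy⟩
        · rintro ⟨M', hss, hm⟩
          refine hss.not_subset ?_
          intro y hy
          obtain ⟨b, hb, hb'⟩ := hm (Rule.mk {y} ∅ ∅) (Or.inr ⟨y, hy, rfl⟩)
            (fun ℓ h => absurd h (Set.notMem_empty ℓ)) (Set.empty_subset _)
          rwa [Set.eq_of_mem_singleton hb] at hb'
      have hmem1 : (B ∪ D) ∉ ((Program.mk 𝒜 {r}).union P).AS := by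
        rintro ⟨-, h2, -⟩
        obtain ⟨b, hbA, hbY⟩ := h2 r (Or.inl (Set.mem_singleton r)) ⟨Set.subset_union_left, hnegY⟩
        exact hc b hbA hbY
      exact hmem1 (heq.mpr hmem2)
  · -- the three sufficient conditions
    rintro (⟨a, haA, haB⟩ | ⟨b, hbB, hbC⟩ | ⟨c, hcC, hcD⟩) <;>
      refine fun P _ => AS_union_taut r 𝒜 ?_ ?_ P
    · rintro I ⟨hpos, -⟩
      exact ⟨a, haA, hpos haB⟩
    · intro Y X hss hneg hpos
      exact ⟨a, haA, hpos haB⟩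
    · rintro I ⟨hpos, hneg⟩
      rw [show r.neg = Lit.pos '' C ∪ Lit.neg '' D from rfl, negsat_iff] at hneg
      exact absurd (hpos hbB) (hneg.1 b hbC)
    · intro Y X hss hneg hpos
      rw [show r.neg = Lit.pos '' C ∪ Lit.neg '' D from rfl, negsat_iff] at hneg
      exact absurd (hss.1 (hpos hbB)) (hneg.1 b hbC)
    · rintro I ⟨-, hneg⟩
      rw [show r.neg = Lit.pos '' C ∪ Lit.neg '' D from rfl, negsat_iff] at hneg
      exact absurd (hneg.2 c hcD) (hneg.1 c hcC)
    · intro Y X hss hneg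
      rw [show r.neg = Lit.pos '' C ∪ Lit.neg '' D from rfl, negsat_iff] at hneg
      exact absurd (hneg.2 c hcD) (hneg.1 c hcC)
end

section
/- An ELP rule r of the form A ← B, ¬C, not D, not ¬E, ¬not F, ¬not ¬G (with A, B, C, D, E, F, G sets of atoms) is tautological if and only if (a) A ∩ B ≠ ∅, or (b) B ∩ (C ∪ G) ≠ ∅, or (c) C ∩ F ≠ ∅, or (d) D ∩ F ≠ ∅, or (e) E ∩ G ≠ ∅, or (f) F ∩ G ≠ ∅. -/
variable {V : Type}

namespace Stmt14Proof

variable {V : Type}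

/-! ### Rule-level satisfaction lemmas -/

lemma sat_fact {J : Set V} {x : V} (h : x ∈ J) : Rule.sat J ⟨{x}, ∅, ∅⟩ :=
  fun _ => ⟨x, Set.mem_singleton x, h⟩

lemma mem_of_sat_fact {J : Set V} {x : V} (h : Rule.sat J ⟨{x}, ∅, ∅⟩) : x ∈ J := by
  obtain ⟨a, ha, haJ⟩ := h ⟨Set.empty_subset J, fun ℓ hl => absurd hl (Set.notMem_empty ℓ)⟩
  rw [Set.mem_singleton_iff] at ha; subst ha; exact haJ

lemma sat_choice {J : Set V} {x : V} : Rule.sat J ⟨{x}, ∅, {Lit.neg x}⟩ :=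
  fun h => ⟨x, Set.mem_singleton x, not_not.mp (h.2 (Lit.neg x) (Set.mem_singleton _))⟩

lemma sat_imp {J : Set V} {x y : V} (h : y ∈ J → x ∈ J) : Rule.sat J ⟨{x}, {y}, ∅⟩ :=
  fun hp => ⟨x, Set.mem_singleton x, h (hp.1 (Set.mem_singleton y))⟩

lemma sat_gate {J : Set V} {x b : V} (h : b ∉ J → x ∈ J) : Rule.sat J ⟨{x}, ∅, {Lit.pos b}⟩ :=
  fun hp => ⟨x, Set.mem_singleton x, h (hp.2 (Lit.pos b) (Set.mem_singleton _))⟩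

lemma sat_ep {J : Set V} {f : V} (h : f ∈ J) : Rule.sat J ⟨∅, ∅, {Lit.pos f}⟩ :=
  fun hp => absurd h (hp.2 (Lit.pos f) (Set.mem_singleton _))

lemma mem_of_sat_ep {J : Set V} {f : V} (h : Rule.sat J ⟨∅, ∅, {Lit.pos f}⟩) : f ∈ J := by
  by_contra hf
  obtain ⟨a, ha, -⟩ := h ⟨Set.empty_subset J, by
    rintro ℓ hl; rw [Set.mem_singleton_iff] at hl; subst hl; exact hf⟩
  exact absurd ha (Set.notMem_empty a)

lemma sat_epn {J : Set V} {g : V} (h : g ∉ J) : Rule.sat J ⟨∅, ∅, {Lit.neg g}⟩ :=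
  fun hp => absurd h (hp.2 (Lit.neg g) (Set.mem_singleton _))

lemma notMem_of_sat_epn {J : Set V} {g : V} (h : Rule.sat J ⟨∅, ∅, {Lit.neg g}⟩) : g ∉ J := by
  intro hg
  obtain ⟨a, ha, -⟩ := h ⟨Set.empty_subset J, by
    rintro ℓ hl; rw [Set.mem_singleton_iff] at hl; subst hl; exact not_not.mpr hg⟩
  exact absurd ha (Set.notMem_empty a)

lemma not_sat_bot {J : Set V} (h : Rule.sat J (⟨∅, ∅, ∅⟩ : Rule V)) : False := by
  obtain ⟨a, ha, -⟩ := h ⟨Set.empty_subset J, fun ℓ hl => absurd hl (Set.notMem_empty ℓ)⟩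
  exact absurd ha (Set.notMem_empty a)

/-! ### redSat lemmas -/

lemma red_fact {Y X : Set V} {x : V} (h : Rule.redSat Y X ⟨{x}, ∅, ∅⟩) : x ∈ X := by
  obtain ⟨a, ha, haX⟩ :=
    h (fun ℓ hl => absurd hl (Set.notMem_empty ℓ)) (Set.empty_subset X)
  rw [Set.mem_singleton_iff] at ha; subst ha; exact haX

lemma red_fact' {Y X : Set V} {x : V} (h : x ∈ X) : Rule.redSat Y X ⟨{x}, ∅, ∅⟩ :=
  fun _ _ => ⟨x, Set.mem_singleton x, h⟩

lemma red_choice {Y X : Set V} {x : V} (h : Rule.redSat Y X ⟨{x}, ∅, {Lit.neg x}⟩)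
    (hx : x ∈ Y) : x ∈ X := by
  obtain ⟨a, ha, haX⟩ := h (by
      rintro ℓ hl; rw [Set.mem_singleton_iff] at hl; subst hl; exact not_not.mpr hx)
    (Set.empty_subset X)
  rw [Set.mem_singleton_iff] at ha; subst ha; exact haX

lemma red_choice' {Y X : Set V} {x : V} (h : x ∈ Y → x ∈ X) :
    Rule.redSat Y X ⟨{x}, ∅, {Lit.neg x}⟩ := by
  intro hn _
  exact ⟨x, Set.mem_singleton x, h (not_not.mp (hn (Lit.neg x) (Set.mem_singleton _)))⟩

lemma red_imp {Y X : Set V} {x y : V} (h : Rule.redSat Y X ⟨{x}, {y}, ∅⟩) (hy : y ∈ X) :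
    x ∈ X := by
  obtain ⟨a, ha, haX⟩ := h (fun ℓ hl => absurd hl (Set.notMem_empty ℓ))
    (Set.singleton_subset_iff.mpr hy)
  rw [Set.mem_singleton_iff] at ha; subst ha; exact haX

lemma red_imp' {Y X : Set V} {x y : V} (h : y ∈ X → x ∈ X) :
    Rule.redSat Y X ⟨{x}, {y}, ∅⟩ :=
  fun _ hp => ⟨x, Set.mem_singleton x, h (hp (Set.mem_singleton y))⟩

lemma red_gate {Y X : Set V} {x b : V} (h : Rule.redSat Y X ⟨{x}, ∅, {Lit.pos b}⟩)
    (hb : b ∉ Y) : x ∈ X := by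
  obtain ⟨a, ha, haX⟩ := h (by
      rintro ℓ hl; rw [Set.mem_singleton_iff] at hl; subst hl; exact hb)
    (Set.empty_subset X)
  rw [Set.mem_singleton_iff] at ha; subst ha; exact haX

lemma red_gate' {Y X : Set V} {x b : V} (h : b ∉ Y → x ∈ X) :
    Rule.redSat Y X ⟨{x}, ∅, {Lit.pos b}⟩ :=
  fun hn _ => ⟨x, Set.mem_singleton x, h (hn (Lit.pos b) (Set.mem_singleton _))⟩

lemma red_ep' {Y X : Set V} {f : V} (h : f ∈ Y) : Rule.redSat Y X ⟨∅, ∅, {Lit.pos f}⟩ :=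
  fun hn => absurd h (hn (Lit.pos f) (Set.mem_singleton _))

lemma red_epn' {Y X : Set V} {g : V} (h : g ∉ Y) : Rule.redSat Y X ⟨∅, ∅, {Lit.neg g}⟩ :=
  fun hn => absurd h (hn (Lit.neg g) (Set.mem_singleton _))

/-! ### ELP rules used in constructions and their reducts -/

def epRp (f : V) : ERule V := ⟨∅, ∅, ∅, {Lit.pos f}, ∅⟩
def epRn (g : V) : ERule V := ⟨∅, ∅, ∅, {Lit.neg g}, ∅⟩
def factR (x : V) : ERule V := ⟨{x}, ∅, ∅, ∅, ∅⟩
def choiceR (x : V) : ERule V := ⟨{x}, ∅, {Lit.neg x}, ∅, ∅⟩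
def impR (x y : V) : ERule V := ⟨{x}, {y}, ∅, ∅, ∅⟩
def gateR (x b : V) : ERule V := ⟨{x}, ∅, {Lit.pos b}, ∅, ∅⟩

lemma reduct_plain {r : ERule V} (h1 : r.epos = ∅) (h2 : r.eneg = ∅) (Φ : Set (Lit V)) :
    r.reduct Φ = ⟨r.head, r.opos, r.oneg⟩ := by
  unfold ERule.reduct
  rw [h1, h2]
  simp

lemma reduct_factR (x : V) (Φ : Set (Lit V)) :
    (factR x).reduct Φ = (⟨{x}, ∅, ∅⟩ : Rule V) := reduct_plain rfl rfl Φ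

lemma reduct_choiceR (x : V) (Φ : Set (Lit V)) :
    (choiceR x).reduct Φ = (⟨{x}, ∅, {Lit.neg x}⟩ : Rule V) := reduct_plain rfl rfl Φ

lemma reduct_impR (x y : V) (Φ : Set (Lit V)) :
    (impR x y).reduct Φ = (⟨{x}, {y}, ∅⟩ : Rule V) := reduct_plain rfl rfl Φ

lemma reduct_gateR (x b : V) (Φ : Set (Lit V)) :
    (gateR x b).reduct Φ = (⟨{x}, ∅, {Lit.pos b}⟩ : Rule V) := reduct_plain rfl rfl Φ

lemma reduct_epRp {f : V} {Φ : Set (Lit V)} (h : Lit.pos f ∉ Φ) :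
    (epRp f).reduct Φ = (⟨∅, ∅, {Lit.pos f}⟩ : Rule V) := by
  have h1 : ({Lit.pos f} : Set (Lit V)) \ Φ = {Lit.pos f} := by
    ext ℓ
    simp only [Set.mem_diff, Set.mem_singleton_iff]
    exact ⟨fun h' => h'.1, by rintro rfl; exact ⟨rfl, h⟩⟩
  show (⟨∅, ∅, ∅ ∪ ({Lit.pos f} \ Φ) ∪ Lit.flip '' ∅⟩ : Rule V) = _
  rw [h1]
  simp

lemma reduct_epRp_bot {f : V} {Φ : Set (Lit V)} (h : Lit.pos f ∈ Φ) :
    (epRp f).reduct Φ = (⟨∅, ∅, ∅⟩ : Rule V) := by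
  have h1 : ({Lit.pos f} : Set (Lit V)) \ Φ = ∅ :=
    Set.diff_eq_empty.mpr (Set.singleton_subset_iff.mpr h)
  show (⟨∅, ∅, ∅ ∪ ({Lit.pos f} \ Φ) ∪ Lit.flip '' ∅⟩ : Rule V) = _
  rw [h1]
  simp

lemma reduct_epRn {g : V} {Φ : Set (Lit V)} (h : Lit.neg g ∉ Φ) :
    (epRn g).reduct Φ = (⟨∅, ∅, {Lit.neg g}⟩ : Rule V) := by
  have h1 : ({Lit.neg g} : Set (Lit V)) \ Φ = {Lit.neg g} := by
    ext ℓ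
    simp only [Set.mem_diff, Set.mem_singleton_iff]
    exact ⟨fun h' => h'.1, by rintro rfl; exact ⟨rfl, h⟩⟩
  show (⟨∅, ∅, ∅ ∪ ({Lit.neg g} \ Φ) ∪ Lit.flip '' ∅⟩ : Rule V) = _
  rw [h1]
  simp

lemma reduct_epRn_bot {g : V} {Φ : Set (Lit V)} (h : Lit.neg g ∈ Φ) :
    (epRn g).reduct Φ = (⟨∅, ∅, ∅⟩ : Rule V) := by
  have h1 : ({Lit.neg g} : Set (Lit V)) \ Φ = ∅ :=
    Set.diff_eq_empty.mpr (Set.singleton_subset_iff.mpr h)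
  show (⟨∅, ∅, ∅ ∪ ({Lit.neg g} \ Φ) ∪ Lit.flip '' ∅⟩ : Rule V) = _
  rw [h1]
  simp

/-! ### eReduct characterizations -/

lemma model_eReduct (P : ELP V) (Φ : Set (Lit V)) (J : Set V) :
    (P.eReduct Φ).model J ↔
      ∀ r' ∈ P.R, (∀ ℓ ∈ r'.eneg, ℓ ∉ Φ) → Rule.sat J (r'.reduct Φ) := by
  constructor
  · intro h r' hr' hk
    exact h _ ⟨r', hr', hk, rfl⟩
  · rintro h q ⟨r', hr', hk, rfl⟩
    exact h r' hr' hk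

lemma redModel_eReduct (P : ELP V) (Φ : Set (Lit V)) (J J' : Set V) :
    (P.eReduct Φ).redModel J J' ↔
      ∀ r' ∈ P.R, (∀ ℓ ∈ r'.eneg, ℓ ∉ Φ) → Rule.redSat J J' (r'.reduct Φ) := by
  constructor
  · intro h r' hr' hk
    exact h _ ⟨r', hr', hk, rfl⟩
  · rintro h q ⟨r', hr', hk, rfl⟩
    exact h r' hr' hk

/-! ### The rule under scrutiny, and tautology lemmas -/

def rr (A B C D E F G : Set V) : ERule V :=
  ⟨A, B, Lit.pos '' C, Lit.pos '' D ∪ Lit.neg '' E, Lit.pos '' F ∪ Lit.neg '' G⟩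

lemma taut_sat {A B C D E F G : Set V}
    (hc : (A ∩ B).Nonempty ∨ (B ∩ (C ∪ G)).Nonempty ∨ (C ∩ F).Nonempty ∨
      (D ∩ F).Nonempty ∨ (E ∩ G).Nonempty ∨ (F ∩ G).Nonempty)
    {Φ : Set (Lit V)} (hk : ∀ ℓ ∈ (rr A B C D E F G).eneg, ℓ ∉ Φ) (I : Set V) :
    Rule.sat I ((rr A B C D E F G).reduct Φ) := by
  rintro ⟨hB, hneg⟩
  have hC : ∀ c ∈ C, c ∉ I := fun c hc' =>
    hneg (Lit.pos c) (Set.mem_union_left _ (Set.mem_union_left _ ⟨c, hc', rfl⟩))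
  have hF : ∀ f ∈ F, f ∈ I := fun f hf => not_not.mp
    (hneg (Lit.neg f)
      (Set.mem_union_right _ ⟨Lit.pos f, Set.mem_union_left _ ⟨f, hf, rfl⟩, rfl⟩))
  have hG : ∀ g ∈ G, g ∉ I := fun g hg =>
    hneg (Lit.pos g)
      (Set.mem_union_right _ ⟨Lit.neg g, Set.mem_union_right _ ⟨g, hg, rfl⟩, rfl⟩)
  have hD : ∀ d ∈ D, Lit.pos d ∉ Φ → d ∉ I := fun d hd hdΦ =>
    hneg (Lit.pos d)
      (Set.mem_union_left _ (Set.mem_union_right _ ⟨Set.mem_union_left _ ⟨d, hd, rfl⟩, hdΦ⟩))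
  have hE : ∀ e ∈ E, Lit.neg e ∉ Φ → e ∈ I := fun e he heΦ => not_not.mp
    (hneg (Lit.neg e)
      (Set.mem_union_left _ (Set.mem_union_right _ ⟨Set.mem_union_right _ ⟨e, he, rfl⟩, heΦ⟩)))
  rcases hc with ⟨a, ha⟩ | ⟨b, hb⟩ | ⟨c, hc'⟩ | ⟨d, hd⟩ | ⟨e, he⟩ | ⟨f, hf⟩
  · exact ⟨a, ha.1, hB ha.2⟩
  · rcases hb.2 with h | h
    · exact absurd (hB hb.1) (hC b h)
    · exact absurd (hB hb.1) (hG b h)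
  · exact absurd (hF c hc'.2) (hC c hc'.1)
  · exact absurd (hF d hd.2)
      (hD d hd.1 (hk (Lit.pos d) (Set.mem_union_left _ ⟨d, hd.2, rfl⟩)))
  · exact absurd (hE e he.1 (hk (Lit.neg e) (Set.mem_union_right _ ⟨e, he.2, rfl⟩)))
      (hG e he.2)
  · exact absurd (hF f hf.1) (hG f hf.2)

lemma taut_red {A B C D E F G : Set V}
    (hc : (A ∩ B).Nonempty ∨ (B ∩ (C ∪ G)).Nonempty ∨ (C ∩ F).Nonempty ∨
      (D ∩ F).Nonempty ∨ (E ∩ G).Nonempty ∨ (F ∩ G).Nonempty)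
    {Φ : Set (Lit V)} (hk : ∀ ℓ ∈ (rr A B C D E F G).eneg, ℓ ∉ Φ)
    {Y X : Set V} (hXY : X ⊆ Y) :
    Rule.redSat Y X ((rr A B C D E F G).reduct Φ) := by
  intro hneg hBX
  have hC : ∀ c ∈ C, c ∉ Y := fun c hc' =>
    hneg (Lit.pos c) (Set.mem_union_left _ (Set.mem_union_left _ ⟨c, hc', rfl⟩))
  have hF : ∀ f ∈ F, f ∈ Y := fun f hf => not_not.mp
    (hneg (Lit.neg f)
      (Set.mem_union_right _ ⟨Lit.pos f, Set.mem_union_left _ ⟨f, hf, rfl⟩, rfl⟩))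
  have hG : ∀ g ∈ G, g ∉ Y := fun g hg =>
    hneg (Lit.pos g)
      (Set.mem_union_right _ ⟨Lit.neg g, Set.mem_union_right _ ⟨g, hg, rfl⟩, rfl⟩)
  have hD : ∀ d ∈ D, Lit.pos d ∉ Φ → d ∉ Y := fun d hd hdΦ =>
    hneg (Lit.pos d)
      (Set.mem_union_left _ (Set.mem_union_right _ ⟨Set.mem_union_left _ ⟨d, hd, rfl⟩, hdΦ⟩))
  have hE : ∀ e ∈ E, Lit.neg e ∉ Φ → e ∈ Y := fun e he heΦ => not_not.mp
    (hneg (Lit.neg e)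
      (Set.mem_union_left _ (Set.mem_union_right _ ⟨Set.mem_union_right _ ⟨e, he, rfl⟩, heΦ⟩)))
  rcases hc with ⟨a, ha⟩ | ⟨b, hb⟩ | ⟨c, hc'⟩ | ⟨d, hd⟩ | ⟨e, he⟩ | ⟨f, hf⟩
  · exact ⟨a, ha.1, hBX ha.2⟩
  · rcases hb.2 with h | h
    · exact absurd (hXY (hBX hb.1)) (hC b h)
    · exact absurd (hXY (hBX hb.1)) (hG b h)
  · exact absurd (hF c hc'.2) (hC c hc'.1)
  · exact absurd (hF d hd.2)
      (hD d hd.1 (hk (Lit.pos d) (Set.mem_union_left _ ⟨d, hd.2, rfl⟩)))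
  · exact absurd (hE e he.1 (hk (Lit.neg e) (Set.mem_union_right _ ⟨e, he.2, rfl⟩)))
      (hG e he.2)
  · exact absurd (hF f hf.1) (hG f hf.2)

/-! ### The easy direction -/

lemma dir_mpr (𝒜 : Set V) (ℰ : Set (Lit V)) (A B C D E F G : Set V)
    (hc : (A ∩ B).Nonempty ∨ (B ∩ (C ∪ G)).Nonempty ∨ (C ∩ F).Nonempty ∨
      (D ∩ F).Nonempty ∨ (E ∩ G).Nonempty ∨ (F ∩ G).Nonempty) :
    ELP.strongELPCWVEq (ELP.mk 𝒜 ℰ {rr A B C D E F G}) (ELP.mk 𝒜 ℰ ∅) := by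
  intro Q hQ M
  have hAS : ∀ Φ : Set (Lit V),
      (((ELP.mk 𝒜 ℰ {rr A B C D E F G}).union Q).eReduct Φ).AS
        = (((ELP.mk 𝒜 ℰ ∅).union Q).eReduct Φ).AS := by
    intro Φ
    ext N
    simp only [Program.AS, Set.mem_setOf_eq]
    unfold Program.answerSet
    have hmod : ∀ N' : Set V,
        (((ELP.mk 𝒜 ℰ {rr A B C D E F G}).union Q).eReduct Φ).model N'
          ↔ (((ELP.mk 𝒜 ℰ ∅).union Q).eReduct Φ).model N' := by
      intro N'
      rw [model_eReduct, model_eReduct]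
      constructor
      · intro h r' hr' hkq
        rcases hr' with hr' | hr'
        · exact absurd hr' (Set.notMem_empty r')
        · exact h r' (Set.mem_union_right _ hr') hkq
      · intro h r' hr' hkq
        rcases hr' with hr' | hr'
        · rw [Set.mem_singleton_iff] at hr'; subst hr'
          exact taut_sat hc hkq N'
        · exact h r' (Set.mem_union_right _ hr') hkq
    have hred : ∀ N' : Set V, N' ⊆ N →
        ((((ELP.mk 𝒜 ℰ {rr A B C D E F G}).union Q).eReduct Φ).redModel N N'
          ↔ (((ELP.mk 𝒜 ℰ ∅).union Q).eReduct Φ).redModel N N') := by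
      intro N' hN'
      rw [redModel_eReduct, redModel_eReduct]
      constructor
      · intro h r' hr' hkq
        rcases hr' with hr' | hr'
        · exact absurd hr' (Set.notMem_empty r')
        · exact h r' (Set.mem_union_right _ hr') hkq
      · intro h r' hr' hkq
        rcases hr' with hr' | hr'
        · rw [Set.mem_singleton_iff] at hr'; subst hr'
          exact taut_red hc hkq hN'
        · exact h r' (Set.mem_union_right _ hr') hkq
    constructor
    · rintro ⟨h1, h2, h3⟩
      refine ⟨h1, (hmod N).mp h2, ?_⟩
      rintro ⟨N', hss, hr⟩
      exact h3 ⟨N', hss, (hred N' hss.subset).mpr hr⟩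
    · rintro ⟨h1, h2, h3⟩
      refine ⟨h1, (hmod N).mpr h2, ?_⟩
      rintro ⟨N', hss, hr⟩
      exact h3 ⟨N', hss, (hred N' hss.subset).mp hr⟩
  constructor
  · rintro ⟨Φ, h1, h2, h3⟩
    exact ⟨Φ, h1, h2.trans (hAS Φ), h3⟩
  · rintro ⟨Φ, h1, h2, h3⟩
    exact ⟨Φ, h1, h2.trans (hAS Φ).symm, h3⟩


/-! ### Guess-forcing and compatibility -/

lemma compat_forced {E Φ : Set (Lit V)} {M : Set (Set V)} (hΦ : Φ ⊆ E)
    (hc : compatible E Φ M) : Φ = {ℓ | ℓ ∈ E ∧ ∃ J ∈ M, ¬ ℓ.sat J} := by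
  ext ℓ
  constructor
  · intro hl
    exact ⟨hΦ hl, hc.2.1 ℓ hl⟩
  · rintro ⟨hE, J, hJ, hns⟩
    by_contra hn
    exact hns (hc.2.2 ℓ ⟨hE, hn⟩ J hJ)

lemma compat_of_forced {E : Set (Lit V)} {M : Set (Set V)} (hne : M.Nonempty) :
    compatible E {ℓ | ℓ ∈ E ∧ ∃ J ∈ M, ¬ ℓ.sat J} M := by
  refine ⟨hne, fun ℓ hl => hl.2, ?_⟩
  rintro ℓ ⟨hE, hn⟩ J hJ
  by_contra hs
  exact hn ⟨hE, J, hJ, hs⟩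

/-! ### Case (i) : A ∩ F = ∅ -/

def QR1 (B E F G : Set V) : Set (ERule V) :=
  epRp '' F ∪ epRn '' G ∪ factR '' F ∪ choiceR '' (B ∪ E)

lemma mem_QR1_ep {B E F G : Set V} {f : V} (hf : f ∈ F) : epRp f ∈ QR1 B E F G :=
  Or.inl (Or.inl (Or.inl ⟨f, hf, rfl⟩))
lemma mem_QR1_epn {B E F G : Set V} {g : V} (hg : g ∈ G) : epRn g ∈ QR1 B E F G :=
  Or.inl (Or.inl (Or.inr ⟨g, hg, rfl⟩))
lemma mem_QR1_fact {B E F G : Set V} {f : V} (hf : f ∈ F) : factR f ∈ QR1 B E F G :=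
  Or.inl (Or.inr ⟨f, hf, rfl⟩)
lemma mem_QR1_choice {B E F G : Set V} {x : V} (hx : x ∈ B ∪ E) : choiceR x ∈ QR1 B E F G :=
  Or.inr ⟨x, hx, rfl⟩

lemma AS_case_i (𝒜 : Set V) (ℰ ℰ' : Set (Lit V)) {B E F G : Set V} {Φ : Set (Lit V)}
    (hkF : ∀ f ∈ F, Lit.pos f ∉ Φ) (hkG : ∀ g ∈ G, Lit.neg g ∉ Φ)
    (hBG : ∀ x, x ∈ B → x ∈ G → False) (hEG : ∀ x, x ∈ E → x ∈ G → False)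
    (hFG : ∀ x, x ∈ F → x ∈ G → False)
    (hB𝒜 : B ⊆ 𝒜) (hE𝒜 : E ⊆ 𝒜) (hF𝒜 : F ⊆ 𝒜) :
    (((ELP.mk 𝒜 ℰ ∅).union (ELP.mk 𝒜 ℰ' (QR1 B E F G))).eReduct Φ).AS
      = {J : Set V | F ⊆ J ∧ J ⊆ B ∪ E ∪ F} := by
  have noeneg : ∀ ℓ ∈ (∅ : Set (Lit V)), ℓ ∉ Φ := fun ℓ hl => absurd hl (Set.notMem_empty ℓ)
  ext J
  simp only [Program.AS, Set.mem_setOf_eq]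
  constructor
  · rintro ⟨hsub, hmod, hmin⟩
    rw [model_eReduct] at hmod
    have hFJ : F ⊆ J := by
      intro f hf
      have h := hmod (epRp f) (Or.inr (mem_QR1_ep hf)) noeneg
      rw [reduct_epRp (hkF f hf)] at h
      exact mem_of_sat_ep h
    have hGJ : ∀ g ∈ G, g ∉ J := by
      intro g hg
      have h := hmod (epRn g) (Or.inr (mem_QR1_epn hg)) noeneg
      rw [reduct_epRn (hkG g hg)] at h
      exact notMem_of_sat_epn h
    refine ⟨hFJ, ?_⟩
    by_contra hnsub
    obtain ⟨x, hxJ, hxW⟩ := Set.not_subset.mp hnsub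
    apply hmin
    refine ⟨J \ {x}, ?_, ?_⟩
    · rw [Set.ssubset_iff_subset_ne]
      refine ⟨Set.diff_subset, fun h => ?_⟩
      rw [← h] at hxJ
      exact hxJ.2 rfl
    · rw [redModel_eReduct]
      rintro r' hr' -
      rcases hr' with hr' | hr'
      · exact absurd hr' (Set.notMem_empty r')
      rcases hr' with ((⟨f, hf, rfl⟩ | ⟨g, hg, rfl⟩) | ⟨f, hf, rfl⟩) | ⟨y, hy, rfl⟩
      · rw [reduct_epRp (hkF f hf)]; exact red_ep' (hFJ hf)
      · rw [reduct_epRn (hkG g hg)]; exact red_epn' (hGJ g hg)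
      · rw [reduct_factR]
        exact red_fact' ⟨hFJ hf, fun h => hxW (Or.inr (Set.mem_singleton_iff.mp h ▸ hf))⟩
      · rw [reduct_choiceR]
        exact red_choice' (fun hyJ =>
          ⟨hyJ, fun h => hxW (Or.inl (Set.mem_singleton_iff.mp h ▸ hy))⟩)
  · rintro ⟨hFJ, hJW⟩
    have hGJ : ∀ g ∈ G, g ∉ J := by
      intro g hg hgJ
      rcases hJW hgJ with (h | h) | h
      · exact hBG g h hg
      · exact hEG g h hg
      · exact hFG g h hg
    refine ⟨?_, ?_, ?_⟩
    · intro x hx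
      rcases hJW hx with (h | h) | h
      · exact Or.inl (hB𝒜 h)
      · exact Or.inl (hE𝒜 h)
      · exact Or.inl (hF𝒜 h)
    · rw [model_eReduct]
      rintro r' hr' -
      rcases hr' with hr' | hr'
      · exact absurd hr' (Set.notMem_empty r')
      rcases hr' with ((⟨f, hf, rfl⟩ | ⟨g, hg, rfl⟩) | ⟨f, hf, rfl⟩) | ⟨y, hy, rfl⟩
      · rw [reduct_epRp (hkF f hf)]; exact sat_ep (hFJ hf)
      · rw [reduct_epRn (hkG g hg)]; exact sat_epn (hGJ g hg)
      · rw [reduct_factR]; exact sat_fact (hFJ hf)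
      · rw [reduct_choiceR]; exact sat_choice
    · rintro ⟨J', hss, hred⟩
      rw [redModel_eReduct] at hred
      have hFJ' : F ⊆ J' := by
        intro f hf
        have h := hred (factR f) (Or.inr (mem_QR1_fact hf)) noeneg
        rw [reduct_factR] at h
        exact red_fact h
      have hch : ∀ y ∈ B ∪ E, y ∈ J → y ∈ J' := by
        intro y hy hyJ
        have h := hred (choiceR y) (Or.inr (mem_QR1_choice hy)) noeneg
        rw [reduct_choiceR] at h
        exact red_choice h hyJ
      have hsub' : J ⊆ J' := by
        intro x hx
        rcases hJW hx with h | h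
        · exact hch x h hx
        · exact hFJ' h
      rw [Set.ssubset_def] at hss
      exact hss.2 hsub'


lemma case_i (𝒜 : Set V) (ℰ : Set (Lit V)) (A B C D E F G : Set V)
    (hℰ𝒜 : ∀ ℓ ∈ ℰ, ℓ.atom ∈ 𝒜)
    (hB𝒜 : B ⊆ 𝒜)
    (hepos : Lit.pos '' D ∪ Lit.neg '' E ⊆ ℰ) (heneg : Lit.pos '' F ∪ Lit.neg '' G ⊆ ℰ)
    (hAB : ∀ x, x ∈ A → x ∈ B → False) (hBC : ∀ x, x ∈ B → x ∈ C → False)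
    (hBG : ∀ x, x ∈ B → x ∈ G → False) (hCF : ∀ x, x ∈ C → x ∈ F → False)
    (hDF : ∀ x, x ∈ D → x ∈ F → False) (hEG : ∀ x, x ∈ E → x ∈ G → False)
    (hFG : ∀ x, x ∈ F → x ∈ G → False) (hAF : ∀ x, x ∈ A → x ∈ F → False)
    (hse : ELP.strongELPCWVEq (ELP.mk 𝒜 ℰ {rr A B C D E F G}) (ELP.mk 𝒜 ℰ ∅)) : False := by
  have hE𝒜 : E ⊆ 𝒜 := fun e he => hℰ𝒜 _ (hepos (Or.inr ⟨e, he, rfl⟩))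
  have hF𝒜 : F ⊆ 𝒜 := fun f hf => hℰ𝒜 _ (heneg (Or.inl ⟨f, hf, rfl⟩))
  have hG𝒜 : G ⊆ 𝒜 := fun g hg => hℰ𝒜 _ (heneg (Or.inr ⟨g, hg, rfl⟩))
  have hDℰ : ∀ d ∈ D, Lit.pos d ∈ ℰ := fun d hd => hepos (Or.inl ⟨d, hd, rfl⟩)
  have hEℰ : ∀ e ∈ E, Lit.neg e ∈ ℰ := fun e he => hepos (Or.inr ⟨e, he, rfl⟩)
  set Q1 : ELP V := ⟨𝒜, Lit.pos '' F ∪ Lit.neg '' G, QR1 B E F G⟩ with hQ1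
  have hQ1wf : Q1.wf := by
    constructor
    · rintro ℓ (⟨f, hf, rfl⟩ | ⟨g, hg, rfl⟩)
      · exact hF𝒜 hf
      · exact hG𝒜 hg
    · rintro r' hr'
      rcases hr' with ((⟨f, hf, rfl⟩ | ⟨g, hg, rfl⟩) | ⟨f, hf, rfl⟩) | ⟨y, hy, rfl⟩
      · exact ⟨Set.empty_subset _, Set.empty_subset _,
          fun ℓ hl => absurd hl (Set.notMem_empty ℓ),
          Set.singleton_subset_iff.mpr (Or.inl ⟨f, hf, rfl⟩), Set.empty_subset _⟩
      · exact ⟨Set.empty_subset _, Set.empty_subset _,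
          fun ℓ hl => absurd hl (Set.notMem_empty ℓ),
          Set.singleton_subset_iff.mpr (Or.inr ⟨g, hg, rfl⟩), Set.empty_subset _⟩
      · exact ⟨Set.singleton_subset_iff.mpr (hF𝒜 hf), Set.empty_subset _,
          fun ℓ hl => absurd hl (Set.notMem_empty ℓ), Set.empty_subset _, Set.empty_subset _⟩
      · refine ⟨Set.singleton_subset_iff.mpr ?_, Set.empty_subset _, ?_,
          Set.empty_subset _, Set.empty_subset _⟩
        · rcases hy with hy | hy
          · exact hB𝒜 hy
          · exact hE𝒜 hy
        · rintro ℓ hl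
          have hl' : ℓ = Lit.neg y := hl
          subst hl'
          rcases hy with hy | hy
          · exact hB𝒜 hy
          · exact hE𝒜 hy
  set M₀ : Set (Set V) := {J : Set V | F ⊆ J ∧ J ⊆ B ∪ E ∪ F} with hM₀
  have hEE : ℰ ∪ Q1.E = ℰ := Set.union_eq_left.mpr heneg
  set Φ₀ : Set (Lit V) := {ℓ | ℓ ∈ ℰ ∧ ∃ J ∈ M₀, ¬ ℓ.sat J} with hΦ₀
  have hFM : F ∈ M₀ := ⟨Set.Subset.rfl, Set.subset_union_right⟩
  have hkF : ∀ f ∈ F, Lit.pos f ∉ Φ₀ := by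
    rintro f hf ⟨-, J, ⟨hFJ, -⟩, hns⟩
    exact hns (hFJ hf)
  have hkG : ∀ g ∈ G, Lit.neg g ∉ Φ₀ := by
    rintro g hg ⟨-, J, ⟨-, hJW⟩, hns⟩
    rcases hJW (not_not.mp hns) with (h | h) | h
    · exact hBG g h hg
    · exact hEG g h hg
    · exact hFG g h hg
  have hASi := AS_case_i 𝒜 ℰ (Lit.pos '' F ∪ Lit.neg '' G)
    hkF hkG hBG hEG hFG hB𝒜 hE𝒜 hF𝒜
  have h2 : ((ELP.mk 𝒜 ℰ ∅).union Q1).isCWV M₀ := by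
    refine ⟨Φ₀, fun ℓ hl => Or.inl hl.1, hASi.symm, ?_⟩
    show compatible (ℰ ∪ Q1.E) Φ₀ M₀
    rw [hEE]
    exact compat_of_forced ⟨F, hFM⟩
  obtain ⟨Φ, hΦsub, hASeq, hcmp⟩ := (hse Q1 hQ1wf M₀).mpr h2
  have hΦsub' : Φ ⊆ ℰ := by rw [← hEE]; exact hΦsub
  have hcmp' : compatible ℰ Φ M₀ := by rw [← hEE]; exact hcmp
  have hΦeq : Φ = Φ₀ := compat_forced hΦsub' hcmp'
  subst hΦeq
  have hY : (B ∪ F : Set V) ∈ M₀ := by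
    refine ⟨Set.subset_union_right, ?_⟩
    rintro x (hx | hx)
    · exact Or.inl (Or.inl hx)
    · exact Or.inr hx
  rw [hASeq] at hY
  obtain ⟨-, hmod, -⟩ := hY
  rw [model_eReduct] at hmod
  have hkept : ∀ ℓ ∈ (rr A B C D E F G).eneg, ℓ ∉ Φ₀ := by
    rintro ℓ (⟨f, hf, rfl⟩ | ⟨g, hg, rfl⟩)
    · exact hkF f hf
    · exact hkG g hg
  have hsat := hmod (rr A B C D E F G) (Or.inl rfl) hkept
  have hneg : ∀ ℓ ∈ ((rr A B C D E F G).reduct Φ₀).neg, ¬ ℓ.sat (B ∪ F) := by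
    rintro ℓ ((⟨c, hc, rfl⟩ | ⟨hin, hnΦ⟩) | ⟨ℓ₀, h₀, rfl⟩)
    · rintro (h | h)
      · exact hBC c h hc
      · exact hCF c hc h
    · exfalso
      rcases hin with ⟨d, hd, rfl⟩ | ⟨e, he, rfl⟩
      · exact hnΦ ⟨hDℰ d hd, F, hFM, fun hdF => hDF d hd hdF⟩
      · refine hnΦ ⟨hEℰ e he, F ∪ {e}, ⟨Set.subset_union_left, ?_⟩,
          not_not.mpr (Or.inr (Set.mem_singleton e))⟩
        exact Set.union_subset Set.subset_union_right
          (Set.singleton_subset_iff.mpr (Or.inl (Or.inr he)))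
    · rcases h₀ with ⟨f, hf, rfl⟩ | ⟨g, hg, rfl⟩
      · exact not_not.mpr (Or.inr hf)
      · rintro (h | h)
        · exact hBG g h hg
        · exact hFG g h hg
  obtain ⟨a, haA, haY⟩ := hsat ⟨Set.subset_union_left, hneg⟩
  rcases haY with h | h
  · exact hAB a haA h
  · exact hAF a haA h


/-! ### Case (ii) : A ∩ F ≠ ∅ -/

def QR2 (a₀ : V) (A B E F G : Set V) : Set (ERule V) :=
  epRp '' F ∪ epRn '' G ∪ {q | ∃ f ∈ F, ∃ a ∈ A ∩ F, q = impR f a}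
    ∪ choiceR '' ((B ∪ E) \ (A ∩ F)) ∪ gateR a₀ '' B ∪ impR a₀ '' (E \ (B ∪ F))

section QR2mem
variable {a₀ : V} {A B E F G : Set V}

lemma mem_QR2_ep {f : V} (hf : f ∈ F) : epRp f ∈ QR2 a₀ A B E F G :=
  Or.inl (Or.inl (Or.inl (Or.inl (Or.inl ⟨f, hf, rfl⟩))))
lemma mem_QR2_epn {g : V} (hg : g ∈ G) : epRn g ∈ QR2 a₀ A B E F G :=
  Or.inl (Or.inl (Or.inl (Or.inl (Or.inr ⟨g, hg, rfl⟩))))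
lemma mem_QR2_imp {f a : V} (hf : f ∈ F) (ha : a ∈ A ∩ F) : impR f a ∈ QR2 a₀ A B E F G :=
  Or.inl (Or.inl (Or.inl (Or.inr ⟨f, hf, a, ha, rfl⟩)))
lemma mem_QR2_choice {x : V} (hx : x ∈ (B ∪ E) \ (A ∩ F)) : choiceR x ∈ QR2 a₀ A B E F G :=
  Or.inl (Or.inl (Or.inr ⟨x, hx, rfl⟩))
lemma mem_QR2_gate {b : V} (hb : b ∈ B) : gateR a₀ b ∈ QR2 a₀ A B E F G :=
  Or.inl (Or.inr ⟨b, hb, rfl⟩)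
lemma mem_QR2_ge {e : V} (he : e ∈ E \ (B ∪ F)) : impR a₀ e ∈ QR2 a₀ A B E F G :=
  Or.inr ⟨e, he, rfl⟩

end QR2mem

lemma sat_rr {A B C D E F G : Set V} {Φ : Set (Lit V)} {J : Set V} {a₀ : V}
    (ha₀ : a₀ ∈ A ∩ F) : Rule.sat J ((rr A B C D E F G).reduct Φ) := by
  rintro ⟨-, hneg⟩
  refine ⟨a₀, ha₀.1, not_not.mp (hneg (Lit.neg a₀) ?_)⟩
  exact Set.mem_union_right _ ⟨Lit.pos a₀, Set.mem_union_left _ ⟨a₀, ha₀.2, rfl⟩, rfl⟩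

lemma red_rr_diff {A B C D E F G : Set V} {Φ : Set (Lit V)} {J : Set V} {x a₀ : V}
    (ha₀ : a₀ ∈ A ∩ F) (ha₀J : a₀ ∈ J) (hne : a₀ ≠ x) :
    Rule.redSat J (J \ {x}) ((rr A B C D E F G).reduct Φ) :=
  fun _ _ => ⟨a₀, ha₀.1, ha₀J, fun h => hne (Set.mem_singleton_iff.mp h)⟩

lemma AS_case_ii₂ (𝒜 : Set V) (ℰ ℰ' : Set (Lit V)) {A B E F G : Set V} {a₀ : V}
    {Φ : Set (Lit V)}
    (ha₀ : a₀ ∈ A ∩ F)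
    (hkF : ∀ f ∈ F, Lit.pos f ∉ Φ) (hkG : ∀ g ∈ G, Lit.neg g ∉ Φ)
    (hAB : ∀ x, x ∈ A → x ∈ B → False)
    (hBG : ∀ x, x ∈ B → x ∈ G → False) (hEG : ∀ x, x ∈ E → x ∈ G → False)
    (hFG : ∀ x, x ∈ F → x ∈ G → False)
    (hB𝒜 : B ⊆ 𝒜) (hE𝒜 : E ⊆ 𝒜) (hF𝒜 : F ⊆ 𝒜) :
    (((ELP.mk 𝒜 ℰ ∅).union (ELP.mk 𝒜 ℰ' (QR2 a₀ A B E F G))).eReduct Φ).AS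
      = {J : Set V | (F ⊆ J ∧ J ⊆ B ∪ E ∪ F) ∧ J ≠ B ∪ F} := by
  have noeneg : ∀ ℓ ∈ (∅ : Set (Lit V)), ℓ ∉ Φ := fun ℓ hl => absurd hl (Set.notMem_empty ℓ)
  ext J
  simp only [Program.AS, Set.mem_setOf_eq]
  constructor
  · rintro ⟨hsub, hmod, hmin⟩
    rw [model_eReduct] at hmod
    have hFJ : F ⊆ J := by
      intro f hf
      have h := hmod (epRp f) (Or.inr (mem_QR2_ep hf)) noeneg
      rw [reduct_epRp (hkF f hf)] at h
      exact mem_of_sat_ep h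
    have hGJ : ∀ g ∈ G, g ∉ J := by
      intro g hg
      have h := hmod (epRn g) (Or.inr (mem_QR2_epn hg)) noeneg
      rw [reduct_epRn (hkG g hg)] at h
      exact notMem_of_sat_epn h
    have ha₀J : a₀ ∈ J := hFJ ha₀.2
    have hJW : J ⊆ B ∪ E ∪ F := by
      by_contra hnsub
      obtain ⟨x, hxJ, hxW⟩ := Set.not_subset.mp hnsub
      apply hmin
      refine ⟨J \ {x}, ?_, ?_⟩
      · rw [Set.ssubset_iff_subset_ne]
        refine ⟨Set.diff_subset, fun h => ?_⟩
        rw [← h] at hxJ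
        exact hxJ.2 rfl
      · rw [redModel_eReduct]
        rintro r' hr' -
        rcases hr' with hr' | hr'
        · exact absurd hr' (Set.notMem_empty r')
        rcases hr' with ((((⟨f, hf, rfl⟩ | ⟨g, hg, rfl⟩) | ⟨f, hf, a, ha, rfl⟩) |
          ⟨y, hy, rfl⟩) | ⟨b, hb, rfl⟩) | ⟨e, he, rfl⟩
        · rw [reduct_epRp (hkF f hf)]; exact red_ep' (hFJ hf)
        · rw [reduct_epRn (hkG g hg)]; exact red_epn' (hGJ g hg)
        · rw [reduct_impR]
          exact red_imp' (fun _ =>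
            ⟨hFJ hf, fun h => hxW (Or.inr (Set.mem_singleton_iff.mp h ▸ hf))⟩)
        · rw [reduct_choiceR]
          exact red_choice' (fun hyJ =>
            ⟨hyJ, fun h => hxW (Or.inl (Set.mem_singleton_iff.mp h ▸ hy.1))⟩)
        · rw [reduct_gateR]
          exact red_gate' (fun _ =>
            ⟨ha₀J, fun h => hxW (Or.inr (Set.mem_singleton_iff.mp h ▸ ha₀.2))⟩)
        · rw [reduct_impR]
          exact red_imp' (fun _ =>
            ⟨ha₀J, fun h => hxW (Or.inr (Set.mem_singleton_iff.mp h ▸ ha₀.2))⟩)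
    refine ⟨⟨hFJ, hJW⟩, ?_⟩
    intro hJY
    apply hmin
    refine ⟨J \ (A ∩ F), ?_, ?_⟩
    · rw [Set.ssubset_iff_subset_ne]
      refine ⟨Set.diff_subset, fun h => ?_⟩
      have : a₀ ∈ J \ (A ∩ F) := h.symm ▸ ha₀J
      exact this.2 ha₀
    · rw [redModel_eReduct]
      rintro r' hr' -
      rcases hr' with hr' | hr'
      · exact absurd hr' (Set.notMem_empty r')
      rcases hr' with ((((⟨f, hf, rfl⟩ | ⟨g, hg, rfl⟩) | ⟨f, hf, a, ha, rfl⟩) |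
        ⟨y, hy, rfl⟩) | ⟨b, hb, rfl⟩) | ⟨e, he, rfl⟩
      · rw [reduct_epRp (hkF f hf)]; exact red_ep' (hFJ hf)
      · rw [reduct_epRn (hkG g hg)]; exact red_epn' (hGJ g hg)
      · rw [reduct_impR]
        exact red_imp' (fun haJ' => absurd ha haJ'.2)
      · rw [reduct_choiceR]
        exact red_choice' (fun hyJ => ⟨hyJ, hy.2⟩)
      · rw [reduct_gateR]
        exact red_gate' (fun hbJ => absurd (by rw [hJY]; exact Or.inl hb) hbJ)
      · rw [reduct_impR]
        refine red_imp' (fun heJ' => ?_)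
        exfalso
        have heJ : e ∈ J := heJ'.1
        rw [hJY] at heJ
        exact he.2 heJ
  · rintro ⟨⟨hFJ, hJW⟩, hJY⟩
    have hGJ : ∀ g ∈ G, g ∉ J := by
      intro g hg hgJ
      rcases hJW hgJ with (h | h) | h
      · exact hBG g h hg
      · exact hEG g h hg
      · exact hFG g h hg
    refine ⟨?_, ?_, ?_⟩
    · intro x hx
      rcases hJW hx with (h | h) | h
      · exact Or.inl (hB𝒜 h)
      · exact Or.inl (hE𝒜 h)
      · exact Or.inl (hF𝒜 h)
    · rw [model_eReduct]
      rintro r' hr' -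
      rcases hr' with hr' | hr'
      · exact absurd hr' (Set.notMem_empty r')
      rcases hr' with ((((⟨f, hf, rfl⟩ | ⟨g, hg, rfl⟩) | ⟨f, hf, a, ha, rfl⟩) |
        ⟨y, hy, rfl⟩) | ⟨b, hb, rfl⟩) | ⟨e, he, rfl⟩
      · rw [reduct_epRp (hkF f hf)]; exact sat_ep (hFJ hf)
      · rw [reduct_epRn (hkG g hg)]; exact sat_epn (hGJ g hg)
      · rw [reduct_impR]; exact sat_imp (fun _ => hFJ hf)
      · rw [reduct_choiceR]; exact sat_choice
      · rw [reduct_gateR]; exact sat_gate (fun _ => hFJ ha₀.2)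
      · rw [reduct_impR]; exact sat_imp (fun _ => hFJ ha₀.2)
    · rintro ⟨J', hss, hred⟩
      rw [redModel_eReduct] at hred
      have hCH : ∀ f ∈ F, ∀ a ∈ A ∩ F, a ∈ J' → f ∈ J' := by
        intro f hf a ha haJ'
        have h := hred (impR f a) (Or.inr (mem_QR2_imp hf ha)) noeneg
        rw [reduct_impR] at h
        exact red_imp h haJ'
      have hch : ∀ y ∈ (B ∪ E) \ (A ∩ F), y ∈ J → y ∈ J' := by
        intro y hy hyJ
        have h := hred (choiceR y) (Or.inr (mem_QR2_choice hy)) noeneg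
        rw [reduct_choiceR] at h
        exact red_choice h hyJ
      have hgb : ∀ b ∈ B, b ∉ J → a₀ ∈ J' := by
        intro b hb hbJ
        have h := hred (gateR a₀ b) (Or.inr (mem_QR2_gate hb)) noeneg
        rw [reduct_gateR] at h
        exact red_gate h hbJ
      have hge : ∀ e ∈ E \ (B ∪ F), e ∈ J' → a₀ ∈ J' := by
        intro e he heJ'
        have h := hred (impR a₀ e) (Or.inr (mem_QR2_ge he)) noeneg
        rw [reduct_impR] at h
        exact red_imp h heJ'
      by_cases ha₀' : a₀ ∈ J'
      · have hsub' : J ⊆ J' := by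
          intro x hx
          rcases hJW hx with (h | h) | h
          · exact hch x ⟨Or.inl h, fun hc => hAB x hc.1 h⟩ hx
          · by_cases hxAF : x ∈ A ∩ F
            · exact hCH x hxAF.2 a₀ ha₀ ha₀'
            · exact hch x ⟨Or.inr h, hxAF⟩ hx
          · exact hCH x h a₀ ha₀ ha₀'
        rw [Set.ssubset_def] at hss
        exact hss.2 hsub'
      · by_cases hBJ : B ⊆ J
        · have hE'J : ∃ e ∈ E \ (B ∪ F), e ∈ J := by
            by_contra hc
            apply hJY
            ext x
            constructor
            · intro hx
              rcases hJW hx with (h | h) | h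
              · exact Or.inl h
              · by_cases hx' : x ∈ B ∪ F
                · exact hx'
                · exact absurd ⟨x, ⟨h, hx'⟩, hx⟩ hc
              · exact Or.inr h
            · rintro (h | h)
              · exact hBJ h
              · exact hFJ h
          obtain ⟨e, he, heJ⟩ := hE'J
          exact ha₀' (hge e he (hch e
            ⟨Or.inr he.1, fun hc => he.2 (Or.inr hc.2)⟩ heJ))
        · obtain ⟨b, hbB, hbJ⟩ := Set.not_subset.mp hBJ
          exact ha₀' (hgb b hbB hbJ)


lemma AS_case_ii₁ (𝒜 : Set V) (ℰ ℰ' : Set (Lit V)) {A B C D E F G : Set V} {a₀ : V}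
    {Φ : Set (Lit V)}
    (ha₀ : a₀ ∈ A ∩ F)
    (hkF : ∀ f ∈ F, Lit.pos f ∉ Φ) (hkG : ∀ g ∈ G, Lit.neg g ∉ Φ)
    (hDΦ : ∀ d ∈ D, Lit.pos d ∈ Φ) (hEΦ : ∀ e ∈ E, Lit.neg e ∈ Φ)
    (hAB : ∀ x, x ∈ A → x ∈ B → False) (hBC : ∀ x, x ∈ B → x ∈ C → False)
    (hBG : ∀ x, x ∈ B → x ∈ G → False) (hCF : ∀ x, x ∈ C → x ∈ F → False)
    (hEG : ∀ x, x ∈ E → x ∈ G → False) (hFG : ∀ x, x ∈ F → x ∈ G → False)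
    (hB𝒜 : B ⊆ 𝒜) (hE𝒜 : E ⊆ 𝒜) (hF𝒜 : F ⊆ 𝒜) :
    (((ELP.mk 𝒜 ℰ {rr A B C D E F G}).union
        (ELP.mk 𝒜 ℰ' (QR2 a₀ A B E F G))).eReduct Φ).AS
      = {J : Set V | F ⊆ J ∧ J ⊆ B ∪ E ∪ F} := by
  have noeneg : ∀ ℓ ∈ (∅ : Set (Lit V)), ℓ ∉ Φ := fun ℓ hl => absurd hl (Set.notMem_empty ℓ)
  have hkrr : ∀ ℓ ∈ (rr A B C D E F G).eneg, ℓ ∉ Φ := by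
    rintro ℓ (⟨f, hf, rfl⟩ | ⟨g, hg, rfl⟩)
    · exact hkF f hf
    · exact hkG g hg
  ext J
  simp only [Program.AS, Set.mem_setOf_eq]
  constructor
  · rintro ⟨hsub, hmod, hmin⟩
    rw [model_eReduct] at hmod
    have hFJ : F ⊆ J := by
      intro f hf
      have h := hmod (epRp f) (Or.inr (mem_QR2_ep hf)) noeneg
      rw [reduct_epRp (hkF f hf)] at h
      exact mem_of_sat_ep h
    have hGJ : ∀ g ∈ G, g ∉ J := by
      intro g hg
      have h := hmod (epRn g) (Or.inr (mem_QR2_epn hg)) noeneg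
      rw [reduct_epRn (hkG g hg)] at h
      exact notMem_of_sat_epn h
    have ha₀J : a₀ ∈ J := hFJ ha₀.2
    refine ⟨hFJ, ?_⟩
    by_contra hnsub
    obtain ⟨x, hxJ, hxW⟩ := Set.not_subset.mp hnsub
    apply hmin
    refine ⟨J \ {x}, ?_, ?_⟩
    · rw [Set.ssubset_iff_subset_ne]
      refine ⟨Set.diff_subset, fun h => ?_⟩
      rw [← h] at hxJ
      exact hxJ.2 rfl
    · rw [redModel_eReduct]
      rintro r' hr' -
      rcases hr' with hr' | hr'
      · rw [Set.mem_singleton_iff] at hr'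
        subst hr'
        exact red_rr_diff ha₀ ha₀J
          (fun heq => hxW (Or.inr (heq ▸ ha₀.2)))
      rcases hr' with ((((⟨f, hf, rfl⟩ | ⟨g, hg, rfl⟩) | ⟨f, hf, a, ha, rfl⟩) |
        ⟨y, hy, rfl⟩) | ⟨b, hb, rfl⟩) | ⟨e, he, rfl⟩
      · rw [reduct_epRp (hkF f hf)]; exact red_ep' (hFJ hf)
      · rw [reduct_epRn (hkG g hg)]; exact red_epn' (hGJ g hg)
      · rw [reduct_impR]
        exact red_imp' (fun _ =>
          ⟨hFJ hf, fun h => hxW (Or.inr (Set.mem_singleton_iff.mp h ▸ hf))⟩)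
      · rw [reduct_choiceR]
        exact red_choice' (fun hyJ =>
          ⟨hyJ, fun h => hxW (Or.inl (Set.mem_singleton_iff.mp h ▸ hy.1))⟩)
      · rw [reduct_gateR]
        exact red_gate' (fun _ =>
          ⟨ha₀J, fun h => hxW (Or.inr (Set.mem_singleton_iff.mp h ▸ ha₀.2))⟩)
      · rw [reduct_impR]
        exact red_imp' (fun _ =>
          ⟨ha₀J, fun h => hxW (Or.inr (Set.mem_singleton_iff.mp h ▸ ha₀.2))⟩)
  · rintro ⟨hFJ, hJW⟩
    have hGJ : ∀ g ∈ G, g ∉ J := by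
      intro g hg hgJ
      rcases hJW hgJ with (h | h) | h
      · exact hBG g h hg
      · exact hEG g h hg
      · exact hFG g h hg
    refine ⟨?_, ?_, ?_⟩
    · intro x hx
      rcases hJW hx with (h | h) | h
      · exact Or.inl (hB𝒜 h)
      · exact Or.inl (hE𝒜 h)
      · exact Or.inl (hF𝒜 h)
    · rw [model_eReduct]
      rintro r' hr' -
      rcases hr' with hr' | hr'
      · rw [Set.mem_singleton_iff] at hr'
        subst hr'
        exact sat_rr ha₀
      rcases hr' with ((((⟨f, hf, rfl⟩ | ⟨g, hg, rfl⟩) | ⟨f, hf, a, ha, rfl⟩) |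
        ⟨y, hy, rfl⟩) | ⟨b, hb, rfl⟩) | ⟨e, he, rfl⟩
      · rw [reduct_epRp (hkF f hf)]; exact sat_ep (hFJ hf)
      · rw [reduct_epRn (hkG g hg)]; exact sat_epn (hGJ g hg)
      · rw [reduct_impR]; exact sat_imp (fun _ => hFJ hf)
      · rw [reduct_choiceR]; exact sat_choice
      · rw [reduct_gateR]; exact sat_gate (fun _ => hFJ ha₀.2)
      · rw [reduct_impR]; exact sat_imp (fun _ => hFJ ha₀.2)
    · rintro ⟨J', hss, hred⟩
      rw [redModel_eReduct] at hred
      have hCH : ∀ f ∈ F, ∀ a ∈ A ∩ F, a ∈ J' → f ∈ J' := by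
        intro f hf a ha haJ'
        have h := hred (impR f a) (Or.inr (mem_QR2_imp hf ha)) noeneg
        rw [reduct_impR] at h
        exact red_imp h haJ'
      have hch : ∀ y ∈ (B ∪ E) \ (A ∩ F), y ∈ J → y ∈ J' := by
        intro y hy hyJ
        have h := hred (choiceR y) (Or.inr (mem_QR2_choice hy)) noeneg
        rw [reduct_choiceR] at h
        exact red_choice h hyJ
      have hgb : ∀ b ∈ B, b ∉ J → a₀ ∈ J' := by
        intro b hb hbJ
        have h := hred (gateR a₀ b) (Or.inr (mem_QR2_gate hb)) noeneg
        rw [reduct_gateR] at h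
        exact red_gate h hbJ
      have hge : ∀ e ∈ E \ (B ∪ F), e ∈ J' → a₀ ∈ J' := by
        intro e he heJ'
        have h := hred (impR a₀ e) (Or.inr (mem_QR2_ge he)) noeneg
        rw [reduct_impR] at h
        exact red_imp h heJ'
      by_cases ha₀' : a₀ ∈ J'
      · have hsub' : J ⊆ J' := by
          intro x hx
          rcases hJW hx with (h | h) | h
          · exact hch x ⟨Or.inl h, fun hc => hAB x hc.1 h⟩ hx
          · by_cases hxAF : x ∈ A ∩ F
            · exact hCH x hxAF.2 a₀ ha₀ ha₀'
            · exact hch x ⟨Or.inr h, hxAF⟩ hx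
          · exact hCH x h a₀ ha₀ ha₀'
        rw [Set.ssubset_def] at hss
        exact hss.2 hsub'
      · by_cases hBJ : B ⊆ J
        · by_cases hE'J : ∃ e ∈ E \ (B ∪ F), e ∈ J
          · obtain ⟨e, he, heJ⟩ := hE'J
            exact ha₀' (hge e he (hch e
              ⟨Or.inr he.1, fun hc => he.2 (Or.inr hc.2)⟩ heJ))
          · have hJY : J = B ∪ F := by
              ext x
              constructor
              · intro hx
                rcases hJW hx with (h | h) | h
                · exact Or.inl h
                · by_cases hx' : x ∈ B ∪ F
                  · exact hx'
                  · exact absurd ⟨x, ⟨h, hx'⟩, hx⟩ hE'J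
                · exact Or.inr h
              · rintro (h | h)
                · exact hBJ h
                · exact hFJ h
            have hq := hred (rr A B C D E F G) (Or.inl rfl) hkrr
            have hBJ' : B ⊆ J' := fun b hb =>
              hch b ⟨Or.inl hb, fun hc => hAB b hc.1 hb⟩ (hBJ hb)
            have hneg : ∀ ℓ ∈ ((rr A B C D E F G).reduct Φ).neg, ¬ ℓ.sat J := by
              rintro ℓ ((⟨c, hc, rfl⟩ | ⟨hin, hnΦ⟩) | ⟨ℓ₀, h₀, rfl⟩)
              · intro hcJ
                rw [hJY] at hcJ
                rcases hcJ with h | h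
                · exact hBC c h hc
                · exact hCF c hc h
              · exfalso
                rcases hin with ⟨d, hd, rfl⟩ | ⟨e, he, rfl⟩
                · exact hnΦ (hDΦ d hd)
                · exact hnΦ (hEΦ e he)
              · rcases h₀ with ⟨f, hf, rfl⟩ | ⟨g, hg, rfl⟩
                · exact not_not.mpr (hFJ hf)
                · exact hGJ g hg
            obtain ⟨a, haA, haJ'⟩ := hq hneg hBJ'
            have haJ : a ∈ J := hss.subset haJ'
            rw [hJY] at haJ
            rcases haJ with h | h
            · exact hAB a haA h
            · exact ha₀' (hCH a₀ ha₀.2 a ⟨haA, h⟩ haJ')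
        · obtain ⟨b, hbB, hbJ⟩ := Set.not_subset.mp hBJ
          exact ha₀' (hgb b hbB hbJ)


lemma case_ii (𝒜 : Set V) (ℰ : Set (Lit V)) (A B C D E F G : Set V) (a₀ : V)
    (ha₀ : a₀ ∈ A ∩ F)
    (hℰ𝒜 : ∀ ℓ ∈ ℰ, ℓ.atom ∈ 𝒜)
    (hA𝒜 : A ⊆ 𝒜) (hB𝒜 : B ⊆ 𝒜)
    (hepos : Lit.pos '' D ∪ Lit.neg '' E ⊆ ℰ) (heneg : Lit.pos '' F ∪ Lit.neg '' G ⊆ ℰ)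
    (hAB : ∀ x, x ∈ A → x ∈ B → False) (hBC : ∀ x, x ∈ B → x ∈ C → False)
    (hBG : ∀ x, x ∈ B → x ∈ G → False) (hCF : ∀ x, x ∈ C → x ∈ F → False)
    (hDF : ∀ x, x ∈ D → x ∈ F → False) (hEG : ∀ x, x ∈ E → x ∈ G → False)
    (hFG : ∀ x, x ∈ F → x ∈ G → False)
    (hse : ELP.strongELPCWVEq (ELP.mk 𝒜 ℰ {rr A B C D E F G}) (ELP.mk 𝒜 ℰ ∅)) : False := by
  have hE𝒜 : E ⊆ 𝒜 := fun e he => hℰ𝒜 _ (hepos (Or.inr ⟨e, he, rfl⟩))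
  have hF𝒜 : F ⊆ 𝒜 := fun f hf => hℰ𝒜 _ (heneg (Or.inl ⟨f, hf, rfl⟩))
  have hG𝒜 : G ⊆ 𝒜 := fun g hg => hℰ𝒜 _ (heneg (Or.inr ⟨g, hg, rfl⟩))
  have hDℰ : ∀ d ∈ D, Lit.pos d ∈ ℰ := fun d hd => hepos (Or.inl ⟨d, hd, rfl⟩)
  have hEℰ : ∀ e ∈ E, Lit.neg e ∈ ℰ := fun e he => hepos (Or.inr ⟨e, he, rfl⟩)
  set Q2 : ELP V := ⟨𝒜, Lit.pos '' F ∪ Lit.neg '' G, QR2 a₀ A B E F G⟩ with hQ2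
  have hQ2wf : Q2.wf := by
    constructor
    · rintro ℓ (⟨f, hf, rfl⟩ | ⟨g, hg, rfl⟩)
      · exact hF𝒜 hf
      · exact hG𝒜 hg
    · rintro r' hr'
      rcases hr' with ((((⟨f, hf, rfl⟩ | ⟨g, hg, rfl⟩) | ⟨f, hf, a, ha, rfl⟩) |
        ⟨y, hy, rfl⟩) | ⟨b, hb, rfl⟩) | ⟨e, he, rfl⟩
      · exact ⟨Set.empty_subset _, Set.empty_subset _,
          fun ℓ hl => absurd hl (Set.notMem_empty ℓ),
          Set.singleton_subset_iff.mpr (Or.inl ⟨f, hf, rfl⟩), Set.empty_subset _⟩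
      · exact ⟨Set.empty_subset _, Set.empty_subset _,
          fun ℓ hl => absurd hl (Set.notMem_empty ℓ),
          Set.singleton_subset_iff.mpr (Or.inr ⟨g, hg, rfl⟩), Set.empty_subset _⟩
      · exact ⟨Set.singleton_subset_iff.mpr (hF𝒜 hf),
          Set.singleton_subset_iff.mpr (hA𝒜 ha.1),
          fun ℓ hl => absurd hl (Set.notMem_empty ℓ), Set.empty_subset _, Set.empty_subset _⟩
      · refine ⟨Set.singleton_subset_iff.mpr ?_, Set.empty_subset _, ?_,
          Set.empty_subset _, Set.empty_subset _⟩
        · rcases hy.1 with hy' | hy'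
          · exact hB𝒜 hy'
          · exact hE𝒜 hy'
        · rintro ℓ hl
          have hl' : ℓ = Lit.neg y := hl
          subst hl'
          rcases hy.1 with hy' | hy'
          · exact hB𝒜 hy'
          · exact hE𝒜 hy'
      · refine ⟨Set.singleton_subset_iff.mpr (hA𝒜 ha₀.1), Set.empty_subset _, ?_,
          Set.empty_subset _, Set.empty_subset _⟩
        rintro ℓ hl
        have hl' : ℓ = Lit.pos b := hl
        subst hl'
        exact hB𝒜 hb
      · exact ⟨Set.singleton_subset_iff.mpr (hA𝒜 ha₀.1),
          Set.singleton_subset_iff.mpr (hE𝒜 he.1),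
          fun ℓ hl => absurd hl (Set.notMem_empty ℓ), Set.empty_subset _, Set.empty_subset _⟩
  set M₁ : Set (Set V) := {J : Set V | F ⊆ J ∧ J ⊆ B ∪ E ∪ F} with hM₁
  have hEE : ℰ ∪ Q2.E = ℰ := Set.union_eq_left.mpr heneg
  set Φ₁ : Set (Lit V) := {ℓ | ℓ ∈ ℰ ∧ ∃ J ∈ M₁, ¬ ℓ.sat J} with hΦ₁
  have hFM : F ∈ M₁ := ⟨Set.Subset.rfl, Set.subset_union_right⟩
  have hkF : ∀ f ∈ F, Lit.pos f ∉ Φ₁ := by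
    rintro f hf ⟨-, J, ⟨hFJ, -⟩, hns⟩
    exact hns (hFJ hf)
  have hkG : ∀ g ∈ G, Lit.neg g ∉ Φ₁ := by
    rintro g hg ⟨-, J, ⟨-, hJW⟩, hns⟩
    rcases hJW (not_not.mp hns) with (h | h) | h
    · exact hBG g h hg
    · exact hEG g h hg
    · exact hFG g h hg
  have hDΦ₁ : ∀ d ∈ D, Lit.pos d ∈ Φ₁ := fun d hd =>
    ⟨hDℰ d hd, F, hFM, fun h => hDF d hd h⟩
  have hEΦ₁ : ∀ e ∈ E, Lit.neg e ∈ Φ₁ := fun e he =>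
    ⟨hEℰ e he, F ∪ {e},
      ⟨Set.subset_union_left,
        Set.union_subset Set.subset_union_right
          (Set.singleton_subset_iff.mpr (Or.inl (Or.inr he)))⟩,
      not_not.mpr (Or.inr (Set.mem_singleton e))⟩
  have h1 : ((ELP.mk 𝒜 ℰ {rr A B C D E F G}).union Q2).isCWV M₁ := by
    refine ⟨Φ₁, fun ℓ hl => Or.inl hl.1,
      (AS_case_ii₁ 𝒜 ℰ (Lit.pos '' F ∪ Lit.neg '' G) ha₀ hkF hkG hDΦ₁ hEΦ₁
        hAB hBC hBG hCF hEG hFG hB𝒜 hE𝒜 hF𝒜).symm, ?_⟩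
    show compatible (ℰ ∪ Q2.E) Φ₁ M₁
    rw [hEE]
    exact compat_of_forced ⟨F, hFM⟩
  obtain ⟨Φ, hΦsub, hASeq, hcmp⟩ := (hse Q2 hQ2wf M₁).mp h1
  have noeneg : ∀ ℓ ∈ (∅ : Set (Lit V)), ℓ ∉ Φ := fun ℓ hl => absurd hl (Set.notMem_empty ℓ)
  have hYM : (B ∪ F : Set V) ∈ M₁ := by
    refine ⟨Set.subset_union_right, ?_⟩
    rintro x (hx | hx)
    · exact Or.inl (Or.inl hx)
    · exact Or.inr hx
  by_cases hk1 : ∀ f ∈ F, Lit.pos f ∉ Φ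
  · by_cases hk2 : ∀ g ∈ G, Lit.neg g ∉ Φ
    · rw [hASeq, AS_case_ii₂ 𝒜 ℰ (Lit.pos '' F ∪ Lit.neg '' G) ha₀ hk1 hk2
        hAB hBG hEG hFG hB𝒜 hE𝒜 hF𝒜] at hYM
      exact hYM.2 rfl
    · push_neg at hk2
      obtain ⟨g, hg, hgΦ⟩ := hk2
      rw [hASeq] at hYM
      obtain ⟨-, hmod, -⟩ := hYM
      rw [model_eReduct] at hmod
      have h := hmod (epRn g) (Or.inr (mem_QR2_epn hg)) noeneg
      rw [reduct_epRn_bot hgΦ] at h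
      exact not_sat_bot h
  · push_neg at hk1
    obtain ⟨f, hf, hfΦ⟩ := hk1
    rw [hASeq] at hYM
    obtain ⟨-, hmod, -⟩ := hYM
    rw [model_eReduct] at hmod
    have h := hmod (epRp f) (Or.inr (mem_QR2_ep hf)) noeneg
    rw [reduct_epRp_bot hfΦ] at h
    exact not_sat_bot h

end Stmt14Proof

/-- An ELP rule `A ← B, ¬C, not D, not ¬E, ¬not F, ¬not ¬G` is
tautological iff `A ∩ B ≠ ∅`, `B ∩ (C ∪ G) ≠ ∅`, `C ∩ F ≠ ∅`, `D ∩ F ≠ ∅`,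
`E ∩ G ≠ ∅`, or `F ∩ G ≠ ∅`. -/
theorem stmt14 {V : Type} (𝒜 : Set V) (ℰ : Set (Lit V)) (A B C D E F G : Set V)
    (hwf : (ELP.mk 𝒜 ℰ
        {ERule.mk A B (Lit.pos '' C) (Lit.pos '' D ∪ Lit.neg '' E)
          (Lit.pos '' F ∪ Lit.neg '' G)}).wf) :
    ELP.strongELPCWVEq
        (ELP.mk 𝒜 ℰ
          {ERule.mk A B (Lit.pos '' C) (Lit.pos '' D ∪ Lit.neg '' E)
            (Lit.pos '' F ∪ Lit.neg '' G)})
        (ELP.mk 𝒜 ℰ ∅) ↔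
      ((A ∩ B).Nonempty ∨ (B ∩ (C ∪ G)).Nonempty ∨ (C ∩ F).Nonempty ∨
        (D ∩ F).Nonempty ∨ (E ∩ G).Nonempty ∨ (F ∩ G).Nonempty) := by
  constructor
  · intro hse
    by_contra hnot
    push_neg at hnot
    obtain ⟨h1, h2, h3, h4, h5, h6⟩ := hnot
    obtain ⟨hℰ𝒜, hrwf⟩ := hwf
    obtain ⟨hA𝒜, hB𝒜, -, hepos, heneg⟩ := hrwf _ (Set.mem_singleton _)
    have hAB : ∀ x, x ∈ A → x ∈ B → False := fun x hx hx' =>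
      Set.eq_empty_iff_forall_notMem.mp h1 x ⟨hx, hx'⟩
    have hBC : ∀ x, x ∈ B → x ∈ C → False := fun x hx hx' =>
      Set.eq_empty_iff_forall_notMem.mp h2 x ⟨hx, Or.inl hx'⟩
    have hBG : ∀ x, x ∈ B → x ∈ G → False := fun x hx hx' =>
      Set.eq_empty_iff_forall_notMem.mp h2 x ⟨hx, Or.inr hx'⟩
    have hCF : ∀ x, x ∈ C → x ∈ F → False := fun x hx hx' =>
      Set.eq_empty_iff_forall_notMem.mp h3 x ⟨hx, hx'⟩
    have hDF : ∀ x, x ∈ D → x ∈ F → False := fun x hx hx' =>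
      Set.eq_empty_iff_forall_notMem.mp h4 x ⟨hx, hx'⟩
    have hEG : ∀ x, x ∈ E → x ∈ G → False := fun x hx hx' =>
      Set.eq_empty_iff_forall_notMem.mp h5 x ⟨hx, hx'⟩
    have hFG : ∀ x, x ∈ F → x ∈ G → False := fun x hx hx' =>
      Set.eq_empty_iff_forall_notMem.mp h6 x ⟨hx, hx'⟩
    rcases (A ∩ F).eq_empty_or_nonempty with hAF | ⟨a₀, ha₀⟩
    · have hAF' : ∀ x, x ∈ A → x ∈ F → False := fun x hx hx' =>
        Set.eq_empty_iff_forall_notMem.mp hAF x ⟨hx, hx'⟩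
      exact Stmt14Proof.case_i 𝒜 ℰ A B C D E F G hℰ𝒜 hB𝒜 hepos heneg
        hAB hBC hBG hCF hDF hEG hFG hAF' hse
    · exact Stmt14Proof.case_ii 𝒜 ℰ A B C D E F G a₀ ha₀ hℰ𝒜 hA𝒜 hB𝒜 hepos heneg
        hAB hBC hBG hCF hDF hEG hFG hse
  · exact fun hc => Stmt14Proof.dir_mpr 𝒜 ℰ A B C D E F G hc
end

section
/- An ELP rule s is subsumed by an ELP rule r if and only if, for the single-rule ELPs Π_r = (𝒜, ℰ, {r}) and Π_s = (𝒜, ℰ, {s}), it holds that 𝒮ℰ_{Π_r}(Φ) ⊆ 𝒮ℰ_{Π_s}(Φ) for all guesses Φ ⊆ ℰ. -/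
variable {V : Type}

/-! ### Auxiliary material for Statement 15 -/

section Stmt15Aux

open Classical

lemma Lit.sat_flip (ℓ : Lit V) (J : Set V) : ℓ.flip.sat J ↔ ¬ ℓ.sat J := by
  cases ℓ <;> simp [Lit.flip, Lit.sat]

lemma Lit.sat_inter {A : Set V} {ℓ : Lit V} (h : ℓ.atom ∈ A) (M : Set V) :
    ℓ.sat (M ∩ A) ↔ ℓ.sat M := by
  cases ℓ <;> simp_all [Lit.sat, Lit.atom]

lemma Rule.redSat_self {t : Rule V} {I : Set V} (h : t.sat I) : t.redSat I I :=
  fun hneg hpos => h ⟨hpos, hneg⟩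

lemma Rule.sat_inter {A : Set V} {t : Rule V} (hw : t.wf A) (M : Set V) :
    t.sat (M ∩ A) ↔ t.sat M := by
  obtain ⟨hh, hp, hn⟩ := hw
  unfold Rule.sat
  have h1 : t.pos ⊆ M ∩ A ↔ t.pos ⊆ M := by
    constructor
    · intro h x hx; exact (h hx).1
    · intro h x hx; exact ⟨h hx, hp hx⟩
  have h2 : (∀ ℓ ∈ t.neg, ¬ ℓ.sat (M ∩ A)) ↔ ∀ ℓ ∈ t.neg, ¬ ℓ.sat M := by
    constructor <;> intro h ℓ hℓ <;>
      simpa [Lit.sat_inter (hn ℓ hℓ)] using h ℓ hℓ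
  have h3 : (∃ a ∈ t.head, a ∈ M ∩ A) ↔ ∃ a ∈ t.head, a ∈ M := by
    constructor
    · rintro ⟨a, ha, hm, _⟩; exact ⟨a, ha, hm⟩
    · rintro ⟨a, ha, hm⟩; exact ⟨a, ha, hm, hh ha⟩
  rw [h1, h2, h3]

lemma Rule.redSat_inter {A : Set V} {t : Rule V} (hw : t.wf A) (M X : Set V) :
    t.redSat (M ∩ A) (X ∩ A) ↔ t.redSat M X := by
  obtain ⟨hh, hp, hn⟩ := hw
  unfold Rule.redSat
  have h2 : (∀ ℓ ∈ t.neg, ¬ ℓ.sat (M ∩ A)) ↔ ∀ ℓ ∈ t.neg, ¬ ℓ.sat M := by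
    constructor <;> intro h ℓ hℓ <;>
      simpa [Lit.sat_inter (hn ℓ hℓ)] using h ℓ hℓ
  have h1 : t.pos ⊆ X ∩ A ↔ t.pos ⊆ X := by
    constructor
    · intro h x hx; exact (h hx).1
    · intro h x hx; exact ⟨h hx, hp hx⟩
  have h3 : (∃ a ∈ t.head, a ∈ X ∩ A) ↔ ∃ a ∈ t.head, a ∈ X := by
    constructor
    · rintro ⟨a, ha, hm, _⟩; exact ⟨a, ha, hm⟩
    · rintro ⟨a, ha, hm⟩; exact ⟨a, ha, hm, hh ha⟩
  rw [h1, h2, h3]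

lemma Program.AS_eq_of {A A' : Set V} {R R' : Set (Rule V)} (hA : A = A') (hR : R = R') :
    (Program.mk A R).AS = (Program.mk A' R').AS := by subst hA; subst hR; rfl

lemma ELP.eReduct_union_R (P Q : ELP V) (Φ : Set (Lit V)) :
    ((P.union Q).eReduct Φ).R = ((P.eReduct Φ).R ∪ (Q.eReduct Φ).R) := by
  ext q
  simp only [ELP.eReduct, ELP.union, Set.mem_setOf_eq, Set.mem_union]
  constructor
  · rintro ⟨t, (ht | ht), hs, hq⟩
    · exact Or.inl ⟨t, ht, hs, hq⟩
    · exact Or.inr ⟨t, ht, hs, hq⟩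
  · rintro (⟨t, ht, hs, hq⟩ | ⟨t, ht, hs, hq⟩)
    · exact ⟨t, Or.inl ht, hs, hq⟩
    · exact ⟨t, Or.inr ht, hs, hq⟩

lemma reduct_toERule (t : Rule V) (Φ : Set (Lit V)) : t.toERule.reduct Φ = t := by
  show Rule.mk _ _ _ = t
  rw [show (Rule.toERule t).oneg ∪ ((Rule.toERule t).epos \ Φ) ∪ (Lit.flip '' (Rule.toERule t).eneg) = t.neg from by simp [Rule.toERule]]
  rfl

/-- The rule set of the reduct of a single-rule ELP. -/
def sReduct (r : ERule V) (Φ : Set (Lit V)) : Set (Rule V) :=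
  {q | (∀ ℓ ∈ r.eneg, ℓ ∉ Φ) ∧ q = r.reduct Φ}

lemma eReduct_singleton_R (A : Set V) (E : Set (Lit V)) (r : ERule V) (Φ : Set (Lit V)) :
    ((ELP.mk A E {r}).eReduct Φ).R = sReduct r Φ := by
  ext q; simp [ELP.eReduct, sReduct]

lemma sReduct_wf {A : Set V} {E : Set (Lit V)} {r : ERule V}
    (hE : ∀ ℓ ∈ E, ℓ.atom ∈ A) (hr : r.wf A E) (Φ : Set (Lit V)) :
    ∀ t ∈ sReduct r Φ, t.wf A := by
  rintro t ⟨-, rfl⟩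
  obtain ⟨h1, h2, h3, h4, h5⟩ := hr
  refine ⟨h1, h2, ?_⟩
  rintro ℓ (⟨hℓ | hℓ⟩ | hℓ)
  · exact h3 ℓ hℓ
  · exact hE ℓ (h4 hℓ.1)
  · obtain ⟨m, hm, rfl⟩ := hℓ
    have := hE m (h5 hm)
    cases m <;> simpa [Lit.flip, Lit.atom] using this

lemma sReduct_inter {E : Set (Lit V)} {r : ERule V} (h4 : r.epos ⊆ E) (h5 : r.eneg ⊆ E)
    (Φ' : Set (Lit V)) : sReduct r (Φ' ∩ E) = sReduct r Φ' := by
  have hred : r.reduct (Φ' ∩ E) = r.reduct Φ' := by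
    show Rule.mk _ _ _ = Rule.mk _ _ _
    congr 1
    ext m
    simp only [Set.mem_union, Set.mem_diff, Set.mem_inter_iff]
    constructor
    · rintro ((h | ⟨h, hn⟩) | h)
      · exact Or.inl (Or.inl h)
      · exact Or.inl (Or.inr ⟨h, fun hx => hn ⟨hx, h4 h⟩⟩)
      · exact Or.inr h
    · rintro ((h | ⟨h, hn⟩) | h)
      · exact Or.inl (Or.inl h)
      · exact Or.inl (Or.inr ⟨h, fun hx => hn hx.1⟩)
      · exact Or.inr h
  have hsur : (∀ ℓ ∈ r.eneg, ℓ ∉ (Φ' ∩ E)) ↔ ∀ ℓ ∈ r.eneg, ℓ ∉ Φ' := by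
    constructor
    · intro h ℓ hℓ hin; exact h ℓ hℓ ⟨hin, h5 hℓ⟩
    · intro h ℓ hℓ hin; exact h ℓ hℓ hin.1
  unfold sReduct; rw [hred, hsur]

end Stmt15Aux
section Stmt15Aux2

open Classical

/-- `(I,I)` is an SE-model of any program `I` models. -/
lemma mem_SE_self {P : Program V} {I : Set V} (hI : I ⊆ P.A) (hm : P.model I) :
    ((I, I) : Set V × Set V) ∈ P.SE :=
  ⟨le_refl I, hI, hm, fun t ht => Rule.redSat_self (hm t ht)⟩

/-- Core AS-transfer lemma for the "easy" direction. -/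
lemma AS_union_eq {A B : Set V} {Rr Rs G : Set (Rule V)}
    (hwr : ∀ t ∈ Rr, t.wf A) (hws : ∀ t ∈ Rs, t.wf A)
    (hSE : (Program.mk A Rr).SE ⊆ (Program.mk A Rs).SE) :
    (Program.mk B (Rr ∪ G)).AS = (Program.mk B (Rr ∪ Rs ∪ G)).AS := by
  have modr : ∀ J : Set V, (∀ t ∈ Rr, t.sat J) → (J ∩ A) ⊆ A ∧
      (Program.mk A Rr).model (J ∩ A) := by
    intro J h
    exact ⟨Set.inter_subset_right, fun t ht => (Rule.sat_inter (hwr t ht) J).2 (h t ht)⟩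
  have key : ∀ J : Set V, (∀ t ∈ Rr, t.sat J) → ((J ∩ A, J ∩ A) : Set V × Set V) ∈
      (Program.mk A Rs).SE := by
    intro J h
    obtain ⟨h1, h2⟩ := modr J h
    exact hSE (mem_SE_self h1 h2)
  ext J
  simp only [Program.AS, Set.mem_setOf_eq, Program.answerSet]
  constructor
  · rintro ⟨hJB, hmod, hmin⟩
    have hRr : ∀ t ∈ Rr, t.sat J := fun t ht => hmod t (Or.inl ht)
    have hRs : ∀ t ∈ Rs, t.sat J := by
      intro t ht
      have := (key J hRr).2.2.1 t ht
      exact (Rule.sat_inter (hws t ht) J).1 this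
    refine ⟨hJB, ?_, ?_⟩
    · rintro t ((ht | ht) | ht)
      · exact hmod t (Or.inl ht)
      · exact hRs t ht
      · exact hmod t (Or.inr ht)
    · rintro ⟨M', hM', hred⟩
      exact hmin ⟨M', hM', by
        rintro t (ht | ht)
        · exact hred t (Or.inl (Or.inl ht))
        · exact hred t (Or.inr ht)⟩
  · rintro ⟨hJB, hmod, hmin⟩
    have hRr : ∀ t ∈ Rr, t.sat J := fun t ht => hmod t (Or.inl (Or.inl ht))
    refine ⟨hJB, ?_, ?_⟩
    · rintro t (ht | ht)
      · exact hRr t ht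
      · exact hmod t (Or.inr ht)
    · rintro ⟨M', hM', hred⟩
      have hsemem : ((M' ∩ A, J ∩ A) : Set V × Set V) ∈ (Program.mk A Rr).SE := by
        refine ⟨Set.inter_subset_inter_left A hM'.1, Set.inter_subset_right,
          (modr J hRr).2, ?_⟩
        intro t ht
        exact (Rule.redSat_inter (hwr t ht) J M').2 (hred t (Or.inl ht))
      have hse2 := hSE hsemem
      have hredMs : ∀ t ∈ Rs, t.redSat J M' := by
        intro t ht
        exact (Rule.redSat_inter (hws t ht) J M').1 (hse2.2.2.2 t ht)
      refine hmin ⟨M', hM', ?_⟩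
      rintro t ((ht | ht) | ht)
      · exact hred t (Or.inl ht)
      · exact hredMs t ht
      · exact hred t (Or.inr ht)

/-! #### Guarded rules for the hard direction -/

/-- Negative body that is satisfied (as a whole) by `J ⊆ A` iff `J = S`. -/
def guardSet (A S : Set V) : Set (Lit V) := Lit.pos '' (A \ S) ∪ Lit.neg '' S

lemma guard_nsat_iff {A S J : Set V} (hS : S ⊆ A) (hJ : J ⊆ A) :
    (∀ ℓ ∈ guardSet A S, ¬ ℓ.sat J) ↔ J = S := by
  constructor
  · intro h
    apply Set.Subset.antisymm
    · intro x hx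
      by_contra hxS
      exact h (Lit.pos x) (Or.inl ⟨x, ⟨hJ hx, hxS⟩, rfl⟩) hx
    · intro x hx
      have := h (Lit.neg x) (Or.inr ⟨x, hx, rfl⟩)
      simpa [Lit.sat] using this
  · rintro rfl ℓ hℓ
    rcases hℓ with ⟨b, hb, rfl⟩ | ⟨c, hc, rfl⟩
    · simpa [Lit.sat] using hb.2
    · simp [Lit.sat, hc]

lemma guard_atom {A S : Set V} (hS : S ⊆ A) : ∀ ℓ ∈ guardSet A S, ℓ.atom ∈ A := by
  rintro ℓ (⟨b, hb, rfl⟩ | ⟨c, hc, rfl⟩)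
  · exact hb.1
  · exact hS hc

lemma sat_guard_rule_of_ne {A S J h p : Set V} (hS : S ⊆ A) (hJ : J ⊆ A) (hne : J ≠ S) :
    (Rule.mk h p (guardSet A S)).sat J := by
  rintro ⟨-, hneg⟩
  exact absurd ((guard_nsat_iff hS hJ).1 hneg) hne

lemma redSat_guard_of_ne {A S Y X h p : Set V} (hS : S ⊆ A) (hY : Y ⊆ A) (hne : Y ≠ S) :
    (Rule.mk h p (guardSet A S)).redSat Y X := by
  intro hneg
  exact absurd ((guard_nsat_iff hS hY).1 hneg) hne

/-- Self-supporting rules for witness interpretations. -/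
def witRules (A : Set V) (I0 : Set (Set V)) : Set (Rule V) :=
  {q | ∃ I ∈ I0, ∃ a ∈ I, q = Rule.mk {a} ∅ (guardSet A I)}

/-- Constraints restricting interpretations to the family `F`. -/
def consRules (A : Set V) (F : Set (Set V)) : Set (Rule V) :=
  {q | ∃ K, K ⊆ A ∧ K ∉ F ∧ q = Rule.mk ∅ ∅ (guardSet A K)}

/-- Facts `S` guarded by `· = Y`. -/
def factRules (A Y S : Set V) : Set (Rule V) :=
  {q | ∃ a ∈ S, q = Rule.mk {a} ∅ (guardSet A Y)}

/-- Chain rules on `S` guarded by `· = Y`. -/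
def chainRules (A Y S : Set V) : Set (Rule V) :=
  {q | ∃ a ∈ S, ∃ b ∈ S, q = Rule.mk {a} {b} (guardSet A Y)}

end Stmt15Aux2
section Stmt15Aux3

open Classical

lemma AS_mem_F {A : Set V} {F : Set (Set V)} {Rset : Set (Rule V)}
    (hcons : consRules A F ⊆ Rset) {J : Set V}
    (h : J ∈ (Program.mk A Rset).AS) : J ∈ F := by
  by_contra hJF
  obtain ⟨hJA, hmod, -⟩ := h
  have hq : Rule.mk ∅ ∅ (guardSet A J) ∈ Rset := hcons ⟨J, hJA, hJF, rfl⟩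
  have := hmod _ hq
  obtain ⟨a, ha, -⟩ := this ⟨by simp, (guard_nsat_iff hJA hJA).2 rfl⟩
  exact absurd ha (by simp)

lemma mem_AS_I0 {A : Set V} {I0 F : Set (Set V)} {R TY : Set (Rule V)} {J : Set V}
    (hI0A : ∀ I ∈ I0, I ⊆ A) (hJ : J ∈ I0) (hJF : J ∈ F)
    (hTY : ∀ t ∈ TY, t.sat J) (hR : ∀ t ∈ R, t.sat J) :
    J ∈ (Program.mk A (R ∪ (witRules A I0 ∪ TY ∪ consRules A F))).AS := by
  have hJA : J ⊆ A := hI0A J hJ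
  refine ⟨hJA, ?_, ?_⟩
  · rintro t (ht | ((⟨I, hI, a, ha, rfl⟩ | ht) | ⟨K, hKA, hKF, rfl⟩))
    · exact hR t ht
    · rintro ⟨-, hneg⟩
      have : J = I := (guard_nsat_iff (hI0A I hI) hJA).1 hneg
      exact ⟨a, rfl, this ▸ ha⟩
    · exact hTY t ht
    · rintro ⟨-, hneg⟩
      exact absurd ((guard_nsat_iff hKA hJA).1 hneg ▸ hJF) hKF
  · rintro ⟨M', hM', hred⟩
    rw [Set.ssubset_def] at hM'
    apply hM'.2
    intro a haJ
    have hq : Rule.mk {a} ∅ (guardSet A J) ∈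
        R ∪ (witRules A I0 ∪ TY ∪ consRules A F) :=
      Or.inr (Or.inl (Or.inl ⟨J, hJ, a, haJ, rfl⟩))
    obtain ⟨c, hc, hcM⟩ := hred _ hq ((guard_nsat_iff hJA hJA).2 rfl) (by simp)
    simp only [Set.mem_singleton_iff] at hc
    exact hc ▸ hcM

lemma mem_AS_Y_fact {A Y : Set V} {I0 F : Set (Set V)} {R : Set (Rule V)}
    (hI0A : ∀ I ∈ I0, I ⊆ A) (hY : Y ⊆ A) (hYF : Y ∈ F) (hYI0 : Y ∉ I0)
    (hR : ∀ t ∈ R, t.sat Y) :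
    Y ∈ (Program.mk A (R ∪ (witRules A I0 ∪ factRules A Y Y ∪ consRules A F))).AS := by
  refine ⟨hY, ?_, ?_⟩
  · rintro t (ht | ((⟨I, hI, a, ha, rfl⟩ | ⟨a, ha, rfl⟩) | ⟨K, hKA, hKF, rfl⟩))
    · exact hR t ht
    · exact sat_guard_rule_of_ne (hI0A I hI) hY (fun h => hYI0 (h ▸ hI))
    · exact fun _ => ⟨a, rfl, ha⟩
    · rintro ⟨-, hneg⟩
      exact absurd ((guard_nsat_iff hKA hY).1 hneg ▸ hYF) hKF
  · rintro ⟨M', hM', hred⟩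
    rw [Set.ssubset_def] at hM'
    apply hM'.2
    intro a haY
    have hq : Rule.mk {a} ∅ (guardSet A Y) ∈
        R ∪ (witRules A I0 ∪ factRules A Y Y ∪ consRules A F) :=
      Or.inr (Or.inl (Or.inr ⟨a, haY, rfl⟩))
    obtain ⟨c, hc, hcM⟩ := hred _ hq ((guard_nsat_iff hY hY).2 rfl) (by simp)
    simp only [Set.mem_singleton_iff] at hc
    exact hc ▸ hcM

lemma mem_AS_Y_chain {A X Y : Set V} {I0 F : Set (Set V)} {R : Set (Rule V)}
    (hI0A : ∀ I ∈ I0, I ⊆ A) (hXY : X ⊂ Y) (hY : Y ⊆ A) (hYF : Y ∈ F) (hYI0 : Y ∉ I0)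
    (hR : ∀ t ∈ R, t.sat Y) (hnmin : ¬ ∀ t ∈ R, t.redSat Y X) :
    Y ∈ (Program.mk A (R ∪ (witRules A I0 ∪ (factRules A Y X ∪ chainRules A Y (Y \ X)) ∪
      consRules A F))).AS := by
  refine ⟨hY, ?_, ?_⟩
  · rintro t (ht | ((⟨I, hI, a, ha, rfl⟩ | (⟨a, ha, rfl⟩ | ⟨a, ha, b, hb, rfl⟩)) |
      ⟨K, hKA, hKF, rfl⟩))
    · exact hR t ht
    · exact sat_guard_rule_of_ne (hI0A I hI) hY (fun h => hYI0 (h ▸ hI))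
    · exact fun _ => ⟨a, rfl, hXY.1 ha⟩
    · exact fun _ => ⟨a, rfl, ha.1⟩
    · rintro ⟨-, hneg⟩
      exact absurd ((guard_nsat_iff hKA hY).1 hneg ▸ hYF) hKF
  · rintro ⟨M', hM', hred⟩
    have hXM : X ⊆ M' := by
      intro a ha
      have hq : Rule.mk {a} ∅ (guardSet A Y) ∈ R ∪ (witRules A I0 ∪ (factRules A Y X ∪ chainRules A Y (Y \ X)) ∪ consRules A F) :=
        Or.inr (Or.inl (Or.inr (Or.inl ⟨a, ha, rfl⟩)))
      obtain ⟨c, hc, hcM⟩ := hred _ hq ((guard_nsat_iff hY hY).2 rfl) (by simp)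
      simp only [Set.mem_singleton_iff] at hc
      exact hc ▸ hcM
    have hMYX : M' ∩ (Y \ X) = ∅ := by
      by_contra hne
      obtain ⟨b, hbM, hbYX⟩ := Set.nonempty_iff_ne_empty.2 hne
      have hYM : Y ⊆ M' := by
        intro a haY
        by_cases haX : a ∈ X
        · exact hXM haX
        · have hq : Rule.mk {a} {b} (guardSet A Y) ∈
              R ∪ (witRules A I0 ∪ (factRules A Y X ∪ chainRules A Y (Y \ X)) ∪ consRules A F) :=
            Or.inr (Or.inl (Or.inr (Or.inr ⟨a, ⟨haY, haX⟩, b, hbYX, rfl⟩)))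
          obtain ⟨c, hc, hcM⟩ := hred _ hq ((guard_nsat_iff hY hY).2 rfl)
            (by simpa using hbM)
          simp only [Set.mem_singleton_iff] at hc
          exact hc ▸ hcM
      rw [Set.ssubset_def] at hM'
      exact hM'.2 hYM
    have hMX : M' = X := by
      apply Set.Subset.antisymm
      · intro x hx
        by_contra hxX
        have hxY : x ∈ Y := hM'.1 hx
        exact absurd (Set.eq_empty_iff_forall_notMem.1 hMYX x) (by simp [hx, hxY, hxX])
      · exact hXM
    apply hnmin
    intro t ht
    exact hMX ▸ hred t (Or.inl ht)

lemma notMem_AS_Y_chain {A X Y : Set V} {I0 F : Set (Set V)} {R : Set (Rule V)}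
    (hI0A : ∀ I ∈ I0, I ⊆ A) (hXY : X ⊂ Y) (hY : Y ⊆ A) (hYF : Y ∈ F) (hYI0 : Y ∉ I0)
    (hmin : ∀ t ∈ R, t.redSat Y X) :
    Y ∉ (Program.mk A (R ∪ (witRules A I0 ∪ (factRules A Y X ∪ chainRules A Y (Y \ X)) ∪
      consRules A F))).AS := by
  rintro ⟨-, -, hminAS⟩
  apply hminAS
  refine ⟨X, hXY, ?_⟩
  rintro t (ht | ((⟨I, hI, a, ha, rfl⟩ | (⟨a, ha, rfl⟩ | ⟨a, ha, b, hb, rfl⟩)) |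
    ⟨K, hKA, hKF, rfl⟩))
  · exact hmin t ht
  · exact redSat_guard_of_ne (hI0A I hI) hY (fun h => hYI0 (h ▸ hI))
  · exact fun _ _ => ⟨a, rfl, ha⟩
  · intro _ hpos
    exact absurd (hpos rfl) hb.2
  · exact redSat_guard_of_ne hKA hY (fun h => hKF (h ▸ hYF))

end Stmt15Aux3
section Stmt15Aux4

open Classical

lemma Program.AS_R_congr {P : Program V} {R' : Set (Rule V)} (h : P.R = R') :
    P.AS = (Program.mk P.A R').AS := by
  cases P; subst h; rfl

lemma eReduct_singleton (A : Set V) (E : Set (Lit V)) (r : ERule V) (Φ : Set (Lit V)) :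
    (ELP.mk A E {r}).eReduct Φ = Program.mk A (sReduct r Φ) := by
  unfold ELP.eReduct
  congr 1
  ext q; simp [sReduct]

/-- Epistemic guess-killer rule `⊥ ← ¬ not ℓ`. -/
def dERule (ℓ : Lit V) : ERule V := ⟨∅, ∅, ∅, ∅, {ℓ}⟩

/-- Rules of the context program used in the hard direction. -/
def QRules (Φ : Set (Lit V)) (QT : Set (Rule V)) : Set (ERule V) :=
  {q | ∃ ℓ ∈ Φ, q = dERule ℓ} ∪ Rule.toERule '' QT

lemma eReduct_QRules (A : Set V) (E Φ : Set (Lit V)) (QT : Set (Rule V)) (Φ' : Set (Lit V)) :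
    ((ELP.mk A E (QRules Φ QT)).eReduct Φ').R =
      {q | ∃ ℓ ∈ Φ, ℓ ∉ Φ' ∧ q = Rule.mk ∅ ∅ {ℓ.flip}} ∪ QT := by
  have hd : ∀ ℓ, (dERule ℓ : ERule V).reduct Φ' = Rule.mk ∅ ∅ {ℓ.flip} := by
    intro ℓ
    show Rule.mk _ _ _ = _
    rw [show (dERule ℓ).oneg ∪ ((dERule ℓ).epos \ Φ') ∪ (Lit.flip '' (dERule ℓ).eneg) =
      ({ℓ.flip} : Set (Lit V)) from by simp [dERule]]
    rfl
  ext q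
  simp only [ELP.eReduct, Set.mem_setOf_eq, QRules, Set.mem_union, Set.mem_image]
  constructor
  · rintro ⟨t, (⟨ℓ, hℓ, rfl⟩ | ⟨u, hu, rfl⟩), hsur, rfl⟩
    · left
      refine ⟨ℓ, hℓ, ?_, hd ℓ⟩
      exact hsur ℓ (by simp [dERule])
    · right; rw [reduct_toERule]; exact hu
  · rintro (⟨ℓ, hℓ, hℓ', rfl⟩ | hq)
    · refine ⟨dERule ℓ, Or.inl ⟨ℓ, hℓ, rfl⟩, ?_, (hd ℓ).symm⟩
      intro m hm
      simp only [dERule, Set.mem_singleton_iff] at hm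
      exact hm ▸ hℓ'
    · exact ⟨Rule.toERule q, Or.inr ⟨q, hq, rfl⟩, by simp [Rule.toERule], (reduct_toERule q Φ').symm⟩

lemma sat_killer {ℓ : Lit V} {J : Set V}
    (h : (Rule.mk ∅ ∅ ({ℓ.flip} : Set (Lit V))).sat J) : ¬ ℓ.sat J := by
  intro hsat
  obtain ⟨a, ha, -⟩ := h ⟨by simp, by
    intro m hm
    simp only [Set.mem_singleton_iff] at hm
    subst hm
    rw [Lit.sat_flip]
    exact not_not_intro hsat⟩
  exact absurd ha (by simp)

lemma realizable_transfer {A : Set V} {E Φ E' Φ' : Set (Lit V)} {P0 : ELP V}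
    {M : Set (Set V)}
    (hEA : ∀ ℓ ∈ E, ℓ.atom ∈ A) (hP0E : P0.E = E) (hP0A : P0.A = A)
    (hΦE : Φ ⊆ E) (hΦ : Φ ⊆ Φ') (hE' : E ⊆ E') (hdiff : ∀ ℓ ∈ E, ℓ ∉ Φ → ℓ ∉ Φ')
    (hcompat : compatible E' Φ' M)
    (hmods : ∀ J ∈ M, (P0.eReduct Φ).model J)
    (hwf : ∀ t ∈ (P0.eReduct Φ).R, t.wf A) :
    P0.realizable Φ := by
  refine ⟨(fun J => J ∩ A) '' M, ?_, ?_, ?_, ?_⟩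
  · rintro K ⟨J, hJ, rfl⟩
    refine ⟨hP0A ▸ Set.inter_subset_right, ?_⟩
    intro t ht
    exact (Rule.sat_inter (hwf t ht) J).2 (hmods J hJ t ht)
  · exact hcompat.1.image _
  · intro ℓ hℓ
    obtain ⟨J, hJ, hns⟩ := hcompat.2.1 ℓ (hΦ hℓ)
    exact ⟨J ∩ A, ⟨J, hJ, rfl⟩, by rw [Lit.sat_inter (hEA ℓ (hΦE hℓ))]; exact hns⟩
  · rintro ℓ ⟨hℓE, hℓΦ⟩ K ⟨J, hJ, rfl⟩
    rw [hP0E] at hℓE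
    rw [Lit.sat_inter (hEA ℓ hℓE)]
    exact hcompat.2.2 ℓ ⟨hE' hℓE, hdiff ℓ hℓE hℓΦ⟩ J hJ

lemma SEfun_step {P1 Ps : ELP V} {Φ : Set (Lit V)}
    (hreal : P1.realizable Φ) (h : P1.SEfun Φ ⊆ Ps.SEfun Φ) :
    Ps.realizable Φ ∧ (P1.eReduct Φ).SE ⊆ (Ps.eReduct Φ).SE := by
  obtain ⟨I', hsub, hcomp⟩ := hreal
  obtain ⟨I, hI⟩ := hcomp.1
  obtain ⟨hIA, hImod⟩ := hsub hI
  have hse : ((I, I) : Set V × Set V) ∈ (P1.eReduct Φ).SE := mem_SE_self hIA hImod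
  have hreal' : P1.realizable Φ := ⟨I', hsub, hcomp⟩
  exact ⟨(h ⟨hreal', hse⟩).1, fun p hp => (h ⟨hreal', hp⟩).2⟩

end Stmt15Aux4

section Stmt15Endgame

lemma endgame {E Φ : Set (Lit V)} {Pb : ELP V} {Mstar : Set (Set V)}
    (hEbE : ∀ ℓ : Lit V, ℓ ∈ Pb.E ↔ ℓ ∈ E)
    (hkillb : ∀ Φ'' : Set (Lit V), ∀ ℓ0 ∈ Φ, ℓ0 ∉ Φ'' →
      ∀ J ∈ (Pb.eReduct Φ'').AS, ¬ ℓ0.sat J)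
    (hΦE : Φ ⊆ E)
    (hwitbad : ∀ ℓ ∈ E, ℓ ∉ Φ → ∀ J ∈ Mstar, ℓ.sat J)
    (hASb : Mstar ≠ (Pb.eReduct Φ).AS)
    (hCWV : Pb.isCWV Mstar) : False := by
  obtain ⟨Φ'', hΦ''E, hMAS, hcomp⟩ := hCWV
  by_cases hsub : Φ ⊆ Φ''
  · by_cases hsub2 : Φ'' ⊆ Φ
    · exact hASb ((Set.Subset.antisymm hsub2 hsub) ▸ hMAS)
    · obtain ⟨ℓ', h1, h2⟩ := Set.not_subset.1 hsub2
      obtain ⟨J, hJ, hns⟩ := hcomp.2.1 ℓ' h1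
      exact hns (hwitbad ℓ' ((hEbE ℓ').1 (hΦ''E h1)) h2 J hJ)
  · obtain ⟨ℓ0, h1, h2⟩ := Set.not_subset.1 hsub
    obtain ⟨J, hJ⟩ := hcomp.1
    exact hkillb Φ'' ℓ0 h1 h2 J (hMAS ▸ hJ) (hcomp.2.2 ℓ0 ⟨(hEbE ℓ0).2 (hΦE h1), h2⟩ J hJ)

end Stmt15Endgame
/-- An ELP rule `s` is subsumed by an ELP rule `r` (i.e. `P_r` is
strongly equivalent to `P_r ∪ P_s`) iff `𝒮ℰ_{P_r}(Φ) ⊆ 𝒮ℰ_{P_s}(Φ)` for all guesses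
`Φ ⊆ ℰ`. -/
theorem stmt15 {V : Type} (A : Set V) (E : Set (Lit V)) (r s : ERule V)
    (hwfr : (ELP.mk A E {r}).wf) (hwfs : (ELP.mk A E {s}).wf) :
    ELP.strongELPCWVEq (ELP.mk A E {r}) ((ELP.mk A E {r}).union (ELP.mk A E {s})) ↔
      ∀ Φ ⊆ E, (ELP.mk A E {r}).SEfun Φ ⊆ (ELP.mk A E {s}).SEfun Φ := by
  classical
  obtain ⟨hEA, hrwf'⟩ := hwfr
  obtain ⟨-, hswf'⟩ := hwfs
  have hrwf : r.wf A E := hrwf' r rfl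
  have hswf : s.wf A E := hswf' s rfl
  constructor
  · -- hard direction
    intro hstrong Φ hΦE p hp
    by_contra hps
    obtain ⟨hreal1, hpSE⟩ := hp
    obtain ⟨X, Y⟩ := p
    obtain ⟨hXY, hYA0, hYmod0, hXred0⟩ := hpSE
    have hYA : Y ⊆ A := hYA0
    rw [eReduct_singleton] at hYmod0 hXred0
    have hYmodr : ∀ t ∈ sReduct r Φ, t.sat Y := hYmod0
    have hXredr : ∀ t ∈ sReduct r Φ, t.redSat Y X := hXred0
    simp only [Set.mem_setOf_eq] at hXY
    by_cases hreal2 : (((ELP.mk A E {r}).union (ELP.mk A E {s}))).realizable Φ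
    · -- case B : Φ realizable in the union program too
      have hR2' : (((ELP.mk A E {r}).union (ELP.mk A E {s})).eReduct Φ).R =
          sReduct r Φ ∪ sReduct s Φ := by
        rw [ELP.eReduct_union_R, eReduct_singleton_R, eReduct_singleton_R]
      obtain ⟨ℐ, hℐsub, hℐcomp⟩ := hreal2
      have hℐA : ∀ I ∈ ℐ, I ⊆ A := by
        intro I hI
        have h2 : I ⊆ A ∪ A := (hℐsub hI).1
        intro x hx
        rcases h2 hx with h' | h' <;> exact h'
      have hℐmodr : ∀ I ∈ ℐ, ∀ t ∈ sReduct r Φ, t.sat I := by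
        intro I hI t ht
        exact (hℐsub hI).2 t (hR2'.symm ▸ Or.inl ht)
      have hℐmods : ∀ I ∈ ℐ, ∀ t ∈ sReduct s Φ, t.sat I := by
        intro I hI t ht
        exact (hℐsub hI).2 t (hR2'.symm ▸ Or.inr ht)
      have hreals : (ELP.mk A E {s}).realizable Φ := by
        refine ⟨ℐ, ?_, hℐcomp.1, hℐcomp.2.1, ?_⟩
        · intro I hI
          refine ⟨hℐA I hI, ?_⟩
          rw [eReduct_singleton]
          exact hℐmods I hI
        · rintro ℓ ⟨hℓE, hℓΦ⟩ J hJ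
          exact hℐcomp.2.2 ℓ ⟨Or.inl hℓE, hℓΦ⟩ J hJ
      have hpsSE : ((X, Y) : Set V × Set V) ∉ (Program.mk A (sReduct s Φ)).SE := by
        rw [← eReduct_singleton A E s Φ]
        exact fun h => hps ⟨hreals, h⟩
      set I0 : Set (Set V) := ℐ \ {Y} with hI0def
      have hI0A : ∀ I ∈ I0, I ⊆ A := fun I hI => hℐA I hI.1
      have hYI0 : Y ∉ I0 := fun h => h.2 rfl
      set F : Set (Set V) := I0 ∪ {Y} with hFdef
      have hYF : Y ∈ F := Or.inr rfl
      by_cases hsY : ∀ t ∈ sReduct s Φ, t.sat Y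
      · -- s-part satisfied by Y: the GL-reduct condition for s must fail
        have hnred : ¬ ∀ t ∈ sReduct s Φ, t.redSat Y X := fun h => hpsSE ⟨hXY, hYA, hsY, h⟩
        have hXneY : X ≠ Y := by
          intro he
          apply hnred
          intro t ht
          rw [he]
          exact Rule.redSat_self (hsY t ht)
        have hXssY : X ⊂ Y := Set.ssubset_iff_subset_ne.2 ⟨hXY, hXneY⟩
        set TY : Set (Rule V) := factRules A Y X ∪ chainRules A Y (Y \ X) with hTYdef
        have hTYwf : ∀ t ∈ TY, t.wf A := by
          rintro t (⟨a, ha, rfl⟩ | ⟨a, ha, b, hb, rfl⟩)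
          · exact ⟨by simpa using hYA (hXY ha), by simp, guard_atom hYA⟩
          · exact ⟨by simpa using hYA ha.1, by simpa using hYA hb.1, guard_atom hYA⟩
        have hTYsat : ∀ J ∈ I0, ∀ t ∈ TY, t.sat J := by
          intro J hJ
          rintro t (⟨a, ha, rfl⟩ | ⟨a, ha, b, hb, rfl⟩) <;>
            exact sat_guard_rule_of_ne hYA (hI0A J hJ) (fun h => hJ.2 h)
        set QT : Set (Rule V) := witRules A I0 ∪ TY ∪ consRules A F with hQTdef
        have hQTwf : ∀ t ∈ QT, t.wf A := by
          rintro t ((⟨I, hI, a, ha, rfl⟩ | ht) | ⟨K, hKA, hKF, rfl⟩)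
          · exact ⟨by simpa using hI0A I hI ha, by simp, guard_atom (hI0A I hI)⟩
          · exact hTYwf t ht
          · exact ⟨by simp, by simp, guard_atom hKA⟩
        set Q : ELP V := ELP.mk A E (QRules Φ QT) with hQdef
        have hQwf : Q.wf := by
          refine ⟨hEA, ?_⟩
          rintro q (⟨ℓ, hℓ, rfl⟩ | ⟨t, ht, rfl⟩)
          · exact ⟨by simp [dERule], by simp [dERule], by simp [dERule], by simp [dERule],
              by simpa [dERule, Set.singleton_subset_iff] using hΦE hℓ⟩
          · obtain ⟨h1, h2, h3⟩ := hQTwf t ht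
            exact ⟨h1, h2, h3, by simp [Rule.toERule], by simp [Rule.toERule]⟩
        have hQR1 : ∀ Φ'' : Set (Lit V), (((ELP.mk A E {r}).union Q).eReduct Φ'').R =
            sReduct r Φ'' ∪
              ({q : Rule V | ∃ ℓ ∈ Φ, ℓ ∉ Φ'' ∧ q = Rule.mk ∅ ∅ {ℓ.flip}} ∪ QT) := by
          intro Φ''
          rw [ELP.eReduct_union_R, eReduct_singleton_R, hQdef, eReduct_QRules]
        have hQR2 : ∀ Φ'' : Set (Lit V),
            ((((ELP.mk A E {r}).union (ELP.mk A E {s})).union Q).eReduct Φ'').R =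
            (sReduct r Φ'' ∪ sReduct s Φ'') ∪
              ({q : Rule V | ∃ ℓ ∈ Φ, ℓ ∉ Φ'' ∧ q = Rule.mk ∅ ∅ {ℓ.flip}} ∪ QT) := by
          intro Φ''
          rw [ELP.eReduct_union_R, ELP.eReduct_union_R, eReduct_singleton_R,
            eReduct_singleton_R, hQdef, eReduct_QRules]
        have hkillΦ : {q : Rule V | ∃ ℓ ∈ Φ, ℓ ∉ Φ ∧ q = Rule.mk ∅ ∅ {ℓ.flip}} =
            (∅ : Set (Rule V)) := by
          ext q
          simp only [Set.mem_setOf_eq, Set.mem_empty_iff_false, iff_false]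
          rintro ⟨ℓ, h1, h2, -⟩
          exact h2 h1
        have hRQT1 : (((ELP.mk A E {r}).union Q).eReduct Φ).R = sReduct r Φ ∪ QT := by
          rw [hQR1 Φ, hkillΦ, Set.empty_union]
        have hRQT2 : ((((ELP.mk A E {r}).union (ELP.mk A E {s})).union Q).eReduct Φ).R =
            (sReduct r Φ ∪ sReduct s Φ) ∪ QT := by
          rw [hQR2 Φ, hkillΦ, Set.empty_union]
        have hAS1 : (((ELP.mk A E {r}).union Q).eReduct Φ).AS =
            (Program.mk A (sReduct r Φ ∪ QT)).AS :=
          (Program.AS_R_congr hRQT1).trans (Program.AS_eq_of (Set.union_self A) rfl)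
        have hAS2 : ((((ELP.mk A E {r}).union (ELP.mk A E {s})).union Q).eReduct Φ).AS =
            (Program.mk A ((sReduct r Φ ∪ sReduct s Φ) ∪ QT)).AS :=
          (Program.AS_R_congr hRQT2).trans
            (Program.AS_eq_of (show ((A ∪ A) ∪ A : Set V) = A by
              rw [Set.union_self, Set.union_self]) rfl)
        have hkill1 : ∀ (Φ'' : Set (Lit V)) (ℓ0 : Lit V), ℓ0 ∈ Φ → ℓ0 ∉ Φ'' →
            ∀ J ∈ (((ELP.mk A E {r}).union Q).eReduct Φ'').AS, ¬ ℓ0.sat J := by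
          intro Φ'' ℓ0 h1 h2 J hJ
          exact sat_killer (hJ.2.1 _ ((hQR1 Φ'').symm ▸ Or.inr (Or.inl ⟨ℓ0, h1, h2, rfl⟩)))
        have hkill2 : ∀ (Φ'' : Set (Lit V)) (ℓ0 : Lit V), ℓ0 ∈ Φ → ℓ0 ∉ Φ'' →
            ∀ J ∈ ((((ELP.mk A E {r}).union (ELP.mk A E {s})).union Q).eReduct Φ'').AS,
              ¬ ℓ0.sat J := by
          intro Φ'' ℓ0 h1 h2 J hJ
          exact sat_killer (hJ.2.1 _ ((hQR2 Φ'').symm ▸ Or.inr (Or.inl ⟨ℓ0, h1, h2, rfl⟩)))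
        have hE1E : ∀ ℓ : Lit V, ℓ ∈ ((ELP.mk A E {r}).union Q).E ↔ ℓ ∈ E := by
          intro ℓ
          constructor
          · rintro (h | h) <;> exact h
          · exact fun h => Or.inl h
        have hE2E : ∀ ℓ : Lit V,
            ℓ ∈ (((ELP.mk A E {r}).union (ELP.mk A E {s})).union Q).E ↔ ℓ ∈ E := by
          intro ℓ
          constructor
          · rintro ((h | h) | h) <;> exact h
          · exact fun h => Or.inl (Or.inl h)
        have hM1 : (((ELP.mk A E {r}).union Q).eReduct Φ).AS = I0 := by
          rw [hAS1]
          ext J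
          constructor
          · intro hJ
            have hJF : J ∈ I0 ∪ {Y} := AS_mem_F (F := F) (fun t ht => Or.inr (Or.inr ht)) hJ
            rcases hJF with h | h
            · exact h
            · rw [Set.mem_singleton_iff] at h
              subst h
              exact absurd hJ (notMem_AS_Y_chain hI0A hXssY hYA hYF hYI0 hXredr)
          · intro hJ
            exact mem_AS_I0 hI0A hJ (Or.inl hJ) (hTYsat J hJ) (hℐmodr J hJ.1)
        have hM2 : ((((ELP.mk A E {r}).union (ELP.mk A E {s})).union Q).eReduct Φ).AS
            = I0 ∪ {Y} := by
          rw [hAS2]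
          ext J
          constructor
          · exact fun hJ => AS_mem_F (F := F) (fun t ht => Or.inr (Or.inr ht)) hJ
          · rintro (hJ | hJ)
            · refine mem_AS_I0 hI0A hJ (Or.inl hJ) (hTYsat J hJ) ?_
              rintro t (ht | ht)
              · exact hℐmodr J hJ.1 t ht
              · exact hℐmods J hJ.1 t ht
            · rw [Set.mem_singleton_iff] at hJ
              subst hJ
              refine mem_AS_Y_chain hI0A hXssY hYA hYF hYI0 ?_ ?_
              · rintro t (ht | ht)
                · exact hYmodr t ht
                · exact hsY t ht
              · intro h
                exact hnred fun t ht => h t (Or.inr ht)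
        by_cases hgood : ∀ ℓ ∈ E, ℓ ∉ Φ → ℓ.sat Y
        · -- Y satisfies all unguessed literals: I0 ∪ {Y} is a CWV of side 2 only
          have hwit : ∀ ℓ ∈ E, ℓ ∉ Φ → ∀ J ∈ I0 ∪ {Y}, ℓ.sat J := by
            intro ℓ hℓE hℓΦ J hJ
            rcases hJ with hJ | hJ
            · exact hℐcomp.2.2 ℓ ⟨Or.inl hℓE, hℓΦ⟩ J hJ.1
            · rw [Set.mem_singleton_iff] at hJ
              exact hJ ▸ hgood ℓ hℓE hℓΦ
          have hcomp0 : compatible E Φ (I0 ∪ {Y}) := by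
            refine ⟨⟨Y, Or.inr rfl⟩, ?_, fun ℓ hℓ J hJ => hwit ℓ hℓ.1 hℓ.2 J hJ⟩
            intro ℓ hℓ
            obtain ⟨J, hJ, hns⟩ := hℐcomp.2.1 ℓ hℓ
            by_cases hJY : J = Y
            · exact ⟨Y, Or.inr rfl, hJY ▸ hns⟩
            · exact ⟨J, Or.inl ⟨hJ, hJY⟩, hns⟩
          have hCWVa : (((ELP.mk A E {r}).union (ELP.mk A E {s})).union Q).isCWVwrt Φ (I0 ∪ {Y}) := by
            refine ⟨fun ℓ hℓ => Or.inl (Or.inl (hΦE hℓ)), hM2.symm, hcomp0.1, hcomp0.2.1, ?_⟩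
            rintro ℓ ⟨hℓE, hℓΦ⟩ J hJ
            exact hwit ℓ ((hE2E ℓ).1 hℓE) hℓΦ J hJ
          refine endgame (Pb := (ELP.mk A E {r}).union Q) hE1E hkill1 hΦE hwit ?_
            ((hstrong Q hQwf _).2 ⟨Φ, hCWVa⟩)
          rw [hM1]
          intro he
          have hmem : Y ∈ I0 ∪ {Y} := Or.inr rfl
          rw [he] at hmem
          exact hYI0 hmem
        · -- Y falsifies some unguessed literal: I0 is a CWV of side 1 only
          push_neg at hgood
          obtain ⟨ℓ0, hℓ0E, hℓ0Φ, hℓ0ns⟩ := hgood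
          have hYℐ : Y ∉ ℐ := fun h => hℓ0ns (hℐcomp.2.2 ℓ0 ⟨Or.inl hℓ0E, hℓ0Φ⟩ Y h)
          have hI0ℐ : I0 = ℐ := by
            rw [hI0def]
            exact Set.diff_singleton_eq_self hYℐ
          have hwit : ∀ ℓ ∈ E, ℓ ∉ Φ → ∀ J ∈ I0, ℓ.sat J :=
            fun ℓ hℓE hℓΦ J hJ => hℐcomp.2.2 ℓ ⟨Or.inl hℓE, hℓΦ⟩ J hJ.1
          have hcomp0 : compatible E Φ I0 := by
            refine ⟨by rw [hI0ℐ]; exact hℐcomp.1, ?_,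
              fun ℓ hℓ J hJ => hwit ℓ hℓ.1 hℓ.2 J hJ⟩
            intro ℓ hℓ
            obtain ⟨J, hJ, hns⟩ := hℐcomp.2.1 ℓ hℓ
            exact ⟨J, by rw [hI0ℐ]; exact hJ, hns⟩
          have hCWVa : ((ELP.mk A E {r}).union Q).isCWVwrt Φ (I0) := by
            refine ⟨fun ℓ hℓ => Or.inl (hΦE hℓ), hM1.symm, hcomp0.1, hcomp0.2.1, ?_⟩
            rintro ℓ ⟨hℓE, hℓΦ⟩ J hJ
            exact hwit ℓ ((hE1E ℓ).1 hℓE) hℓΦ J hJ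
          refine endgame (Pb := ((ELP.mk A E {r}).union (ELP.mk A E {s})).union Q) hE2E hkill2
            hΦE hwit ?_ ((hstrong Q hQwf _).1 ⟨Φ, hCWVa⟩)
          rw [hM2]
          intro he
          have hmem : Y ∈ I0 ∪ {Y} := Or.inr rfl
          rw [← he] at hmem
          exact hYI0 hmem
      · -- s-part not satisfied by Y
        set TY : Set (Rule V) := factRules A Y Y with hTYdef
        have hTYwf : ∀ t ∈ TY, t.wf A := by
          rintro t ⟨a, ha, rfl⟩
          exact ⟨by simpa using hYA ha, by simp, guard_atom hYA⟩
        have hTYsat : ∀ J ∈ I0, ∀ t ∈ TY, t.sat J := by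
          intro J hJ
          rintro t ⟨a, ha, rfl⟩
          exact sat_guard_rule_of_ne hYA (hI0A J hJ) (fun h => hJ.2 h)
        set QT : Set (Rule V) := witRules A I0 ∪ TY ∪ consRules A F with hQTdef
        have hQTwf : ∀ t ∈ QT, t.wf A := by
          rintro t ((⟨I, hI, a, ha, rfl⟩ | ht) | ⟨K, hKA, hKF, rfl⟩)
          · exact ⟨by simpa using hI0A I hI ha, by simp, guard_atom (hI0A I hI)⟩
          · exact hTYwf t ht
          · exact ⟨by simp, by simp, guard_atom hKA⟩
        set Q : ELP V := ELP.mk A E (QRules Φ QT) with hQdef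
        have hQwf : Q.wf := by
          refine ⟨hEA, ?_⟩
          rintro q (⟨ℓ, hℓ, rfl⟩ | ⟨t, ht, rfl⟩)
          · exact ⟨by simp [dERule], by simp [dERule], by simp [dERule], by simp [dERule],
              by simpa [dERule, Set.singleton_subset_iff] using hΦE hℓ⟩
          · obtain ⟨h1, h2, h3⟩ := hQTwf t ht
            exact ⟨h1, h2, h3, by simp [Rule.toERule], by simp [Rule.toERule]⟩
        have hQR1 : ∀ Φ'' : Set (Lit V), (((ELP.mk A E {r}).union Q).eReduct Φ'').R =
            sReduct r Φ'' ∪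
              ({q : Rule V | ∃ ℓ ∈ Φ, ℓ ∉ Φ'' ∧ q = Rule.mk ∅ ∅ {ℓ.flip}} ∪ QT) := by
          intro Φ''
          rw [ELP.eReduct_union_R, eReduct_singleton_R, hQdef, eReduct_QRules]
        have hQR2 : ∀ Φ'' : Set (Lit V),
            ((((ELP.mk A E {r}).union (ELP.mk A E {s})).union Q).eReduct Φ'').R =
            (sReduct r Φ'' ∪ sReduct s Φ'') ∪
              ({q : Rule V | ∃ ℓ ∈ Φ, ℓ ∉ Φ'' ∧ q = Rule.mk ∅ ∅ {ℓ.flip}} ∪ QT) := by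
          intro Φ''
          rw [ELP.eReduct_union_R, ELP.eReduct_union_R, eReduct_singleton_R,
            eReduct_singleton_R, hQdef, eReduct_QRules]
        have hkillΦ : {q : Rule V | ∃ ℓ ∈ Φ, ℓ ∉ Φ ∧ q = Rule.mk ∅ ∅ {ℓ.flip}} =
            (∅ : Set (Rule V)) := by
          ext q
          simp only [Set.mem_setOf_eq, Set.mem_empty_iff_false, iff_false]
          rintro ⟨ℓ, h1, h2, -⟩
          exact h2 h1
        have hRQT1 : (((ELP.mk A E {r}).union Q).eReduct Φ).R = sReduct r Φ ∪ QT := by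
          rw [hQR1 Φ, hkillΦ, Set.empty_union]
        have hRQT2 : ((((ELP.mk A E {r}).union (ELP.mk A E {s})).union Q).eReduct Φ).R =
            (sReduct r Φ ∪ sReduct s Φ) ∪ QT := by
          rw [hQR2 Φ, hkillΦ, Set.empty_union]
        have hAS1 : (((ELP.mk A E {r}).union Q).eReduct Φ).AS =
            (Program.mk A (sReduct r Φ ∪ QT)).AS :=
          (Program.AS_R_congr hRQT1).trans (Program.AS_eq_of (Set.union_self A) rfl)
        have hAS2 : ((((ELP.mk A E {r}).union (ELP.mk A E {s})).union Q).eReduct Φ).AS =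
            (Program.mk A ((sReduct r Φ ∪ sReduct s Φ) ∪ QT)).AS :=
          (Program.AS_R_congr hRQT2).trans
            (Program.AS_eq_of (show ((A ∪ A) ∪ A : Set V) = A by
              rw [Set.union_self, Set.union_self]) rfl)
        have hkill1 : ∀ (Φ'' : Set (Lit V)) (ℓ0 : Lit V), ℓ0 ∈ Φ → ℓ0 ∉ Φ'' →
            ∀ J ∈ (((ELP.mk A E {r}).union Q).eReduct Φ'').AS, ¬ ℓ0.sat J := by
          intro Φ'' ℓ0 h1 h2 J hJ
          exact sat_killer (hJ.2.1 _ ((hQR1 Φ'').symm ▸ Or.inr (Or.inl ⟨ℓ0, h1, h2, rfl⟩)))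
        have hkill2 : ∀ (Φ'' : Set (Lit V)) (ℓ0 : Lit V), ℓ0 ∈ Φ → ℓ0 ∉ Φ'' →
            ∀ J ∈ ((((ELP.mk A E {r}).union (ELP.mk A E {s})).union Q).eReduct Φ'').AS,
              ¬ ℓ0.sat J := by
          intro Φ'' ℓ0 h1 h2 J hJ
          exact sat_killer (hJ.2.1 _ ((hQR2 Φ'').symm ▸ Or.inr (Or.inl ⟨ℓ0, h1, h2, rfl⟩)))
        have hE1E : ∀ ℓ : Lit V, ℓ ∈ ((ELP.mk A E {r}).union Q).E ↔ ℓ ∈ E := by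
          intro ℓ
          constructor
          · rintro (h | h) <;> exact h
          · exact fun h => Or.inl h
        have hE2E : ∀ ℓ : Lit V,
            ℓ ∈ (((ELP.mk A E {r}).union (ELP.mk A E {s})).union Q).E ↔ ℓ ∈ E := by
          intro ℓ
          constructor
          · rintro ((h | h) | h) <;> exact h
          · exact fun h => Or.inl (Or.inl h)
        have hM1 : (((ELP.mk A E {r}).union Q).eReduct Φ).AS = I0 ∪ {Y} := by
          rw [hAS1]
          ext J
          constructor
          · exact fun hJ => AS_mem_F (F := F) (fun t ht => Or.inr (Or.inr ht)) hJ
          · rintro (hJ | hJ)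
            · exact mem_AS_I0 hI0A hJ (Or.inl hJ) (hTYsat J hJ) (hℐmodr J hJ.1)
            · rw [Set.mem_singleton_iff] at hJ
              subst hJ
              exact mem_AS_Y_fact hI0A hYA hYF hYI0 hYmodr
        have hM2 : ((((ELP.mk A E {r}).union (ELP.mk A E {s})).union Q).eReduct Φ).AS
            = I0 := by
          rw [hAS2]
          ext J
          constructor
          · intro hJ
            have hJF : J ∈ I0 ∪ {Y} := AS_mem_F (F := F) (fun t ht => Or.inr (Or.inr ht)) hJ
            rcases hJF with h | h
            · exact h
            · rw [Set.mem_singleton_iff] at h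
              subst h
              exact absurd (fun t ht => hJ.2.1 t (Or.inl (Or.inr ht))) hsY
          · intro hJ
            refine mem_AS_I0 hI0A hJ (Or.inl hJ) (hTYsat J hJ) ?_
            rintro t (ht | ht)
            · exact hℐmodr J hJ.1 t ht
            · exact hℐmods J hJ.1 t ht
        by_cases hgood : ∀ ℓ ∈ E, ℓ ∉ Φ → ℓ.sat Y
        · -- I0 ∪ {Y} is a CWV of side 1 only
          have hwit : ∀ ℓ ∈ E, ℓ ∉ Φ → ∀ J ∈ I0 ∪ {Y}, ℓ.sat J := by
            intro ℓ hℓE hℓΦ J hJ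
            rcases hJ with hJ | hJ
            · exact hℐcomp.2.2 ℓ ⟨Or.inl hℓE, hℓΦ⟩ J hJ.1
            · rw [Set.mem_singleton_iff] at hJ
              exact hJ ▸ hgood ℓ hℓE hℓΦ
          have hcomp0 : compatible E Φ (I0 ∪ {Y}) := by
            refine ⟨⟨Y, Or.inr rfl⟩, ?_, fun ℓ hℓ J hJ => hwit ℓ hℓ.1 hℓ.2 J hJ⟩
            intro ℓ hℓ
            obtain ⟨J, hJ, hns⟩ := hℐcomp.2.1 ℓ hℓ
            by_cases hJY : J = Y
            · exact ⟨Y, Or.inr rfl, hJY ▸ hns⟩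
            · exact ⟨J, Or.inl ⟨hJ, hJY⟩, hns⟩
          have hCWVa : ((ELP.mk A E {r}).union Q).isCWVwrt Φ (I0 ∪ {Y}) := by
            refine ⟨fun ℓ hℓ => Or.inl (hΦE hℓ), hM1.symm, hcomp0.1, hcomp0.2.1, ?_⟩
            rintro ℓ ⟨hℓE, hℓΦ⟩ J hJ
            exact hwit ℓ ((hE1E ℓ).1 hℓE) hℓΦ J hJ
          refine endgame (Pb := ((ELP.mk A E {r}).union (ELP.mk A E {s})).union Q) hE2E hkill2
            hΦE hwit ?_ ((hstrong Q hQwf _).1 ⟨Φ, hCWVa⟩)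
          rw [hM2]
          intro he
          have hmem : Y ∈ I0 ∪ {Y} := Or.inr rfl
          rw [he] at hmem
          exact hYI0 hmem
        · -- I0 is a CWV of side 2 only
          push_neg at hgood
          obtain ⟨ℓ0, hℓ0E, hℓ0Φ, hℓ0ns⟩ := hgood
          have hYℐ : Y ∉ ℐ := fun h => hℓ0ns (hℐcomp.2.2 ℓ0 ⟨Or.inl hℓ0E, hℓ0Φ⟩ Y h)
          have hI0ℐ : I0 = ℐ := by
            rw [hI0def]
            exact Set.diff_singleton_eq_self hYℐ
          have hwit : ∀ ℓ ∈ E, ℓ ∉ Φ → ∀ J ∈ I0, ℓ.sat J :=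
            fun ℓ hℓE hℓΦ J hJ => hℐcomp.2.2 ℓ ⟨Or.inl hℓE, hℓΦ⟩ J hJ.1
          have hcomp0 : compatible E Φ I0 := by
            refine ⟨by rw [hI0ℐ]; exact hℐcomp.1, ?_,
              fun ℓ hℓ J hJ => hwit ℓ hℓ.1 hℓ.2 J hJ⟩
            intro ℓ hℓ
            obtain ⟨J, hJ, hns⟩ := hℐcomp.2.1 ℓ hℓ
            exact ⟨J, by rw [hI0ℐ]; exact hJ, hns⟩
          have hCWVa : (((ELP.mk A E {r}).union (ELP.mk A E {s})).union Q).isCWVwrt Φ (I0) := by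
            refine ⟨fun ℓ hℓ => Or.inl (Or.inl (hΦE hℓ)), hM2.symm, hcomp0.1, hcomp0.2.1, ?_⟩
            rintro ℓ ⟨hℓE, hℓΦ⟩ J hJ
            exact hwit ℓ ((hE2E ℓ).1 hℓE) hℓΦ J hJ
          refine endgame (Pb := (ELP.mk A E {r}).union Q) hE1E hkill1 hΦE hwit ?_
            ((hstrong Q hQwf _).2 ⟨Φ, hCWVa⟩)
          rw [hM1]
          intro he
          have hmem : Y ∈ I0 ∪ {Y} := Or.inr rfl
          rw [← he] at hmem
          exact hYI0 hmem
    · -- case A : Φ realizable in P1 but not in P2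
      obtain ⟨I0, hI0sub, hI0comp⟩ := hreal1
      have hI0A : ∀ I ∈ I0, I ⊆ A := fun I hI => (hI0sub hI).1
      have hI0modr : ∀ I ∈ I0, ∀ t ∈ sReduct r Φ, t.sat I := by
        intro I hI t ht
        have := (hI0sub hI).2
        rw [eReduct_singleton] at this
        exact this t ht
      -- the context program
      set QT : Set (Rule V) :=
        witRules A I0 ∪ (∅ : Set (Rule V)) ∪ consRules A I0 with hQTdef
      have hQTwf : ∀ t ∈ QT, t.wf A := by
        rintro t ((⟨I, hI, a, ha, rfl⟩ | h) | ⟨K, hKA, hKF, rfl⟩)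
        · exact ⟨by simpa using hI0A I hI ha, by simp, guard_atom (hI0A I hI)⟩
        · exact absurd h (Set.notMem_empty t)
        · exact ⟨by simp, by simp, guard_atom hKA⟩
      set Q : ELP V := ELP.mk A E (QRules Φ QT) with hQdef
      have hQwf : Q.wf := by
        refine ⟨hEA, ?_⟩
        rintro q (⟨ℓ, hℓ, rfl⟩ | ⟨t, ht, rfl⟩)
        · exact ⟨by simp [dERule], by simp [dERule], by simp [dERule], by simp [dERule],
            by simpa [dERule, Set.singleton_subset_iff] using hΦE hℓ⟩
        · obtain ⟨h1, h2, h3⟩ := hQTwf t ht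
          exact ⟨h1, h2, h3, by simp [Rule.toERule], by simp [Rule.toERule]⟩
      -- rule sets of the joint reducts
      have hQR1 : ∀ Φ'' : Set (Lit V), (((ELP.mk A E {r}).union Q).eReduct Φ'').R =
          sReduct r Φ'' ∪
            ({q : Rule V | ∃ ℓ ∈ Φ, ℓ ∉ Φ'' ∧ q = Rule.mk ∅ ∅ {ℓ.flip}} ∪ QT) := by
        intro Φ''
        rw [ELP.eReduct_union_R, eReduct_singleton_R, hQdef, eReduct_QRules]
      have hQR2 : ∀ Φ'' : Set (Lit V),
          ((((ELP.mk A E {r}).union (ELP.mk A E {s})).union Q).eReduct Φ'').R =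
          (sReduct r Φ'' ∪ sReduct s Φ'') ∪
            ({q : Rule V | ∃ ℓ ∈ Φ, ℓ ∉ Φ'' ∧ q = Rule.mk ∅ ∅ {ℓ.flip}} ∪ QT) := by
        intro Φ''
        rw [ELP.eReduct_union_R, ELP.eReduct_union_R, eReduct_singleton_R,
          eReduct_singleton_R, hQdef, eReduct_QRules]
      have hkillΦ : {q : Rule V | ∃ ℓ ∈ Φ, ℓ ∉ Φ ∧ q = Rule.mk ∅ ∅ {ℓ.flip}} =
          (∅ : Set (Rule V)) := by
        ext q
        simp only [Set.mem_setOf_eq, Set.mem_empty_iff_false, iff_false]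
        rintro ⟨ℓ, h1, h2, -⟩
        exact h2 h1
      have hRQT1 : (((ELP.mk A E {r}).union Q).eReduct Φ).R = sReduct r Φ ∪ QT := by
        rw [hQR1 Φ, hkillΦ, Set.empty_union]
      have hAS1 : (((ELP.mk A E {r}).union Q).eReduct Φ).AS =
          (Program.mk A (sReduct r Φ ∪ QT)).AS :=
        (Program.AS_R_congr hRQT1).trans (Program.AS_eq_of (Set.union_self A) rfl)
      -- killers block candidate world views for wrong guesses
      have hkill1 : ∀ (Φ'' : Set (Lit V)) (ℓ0 : Lit V), ℓ0 ∈ Φ → ℓ0 ∉ Φ'' →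
          ∀ J ∈ (((ELP.mk A E {r}).union Q).eReduct Φ'').AS, ¬ ℓ0.sat J := by
        intro Φ'' ℓ0 h1 h2 J hJ
        exact sat_killer (hJ.2.1 _ ((hQR1 Φ'').symm ▸ Or.inr (Or.inl ⟨ℓ0, h1, h2, rfl⟩)))
      have hkill2 : ∀ (Φ'' : Set (Lit V)) (ℓ0 : Lit V), ℓ0 ∈ Φ → ℓ0 ∉ Φ'' →
          ∀ J ∈ ((((ELP.mk A E {r}).union (ELP.mk A E {s})).union Q).eReduct Φ'').AS,
            ¬ ℓ0.sat J := by
        intro Φ'' ℓ0 h1 h2 J hJ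
        exact sat_killer (hJ.2.1 _ ((hQR2 Φ'').symm ▸ Or.inr (Or.inl ⟨ℓ0, h1, h2, rfl⟩)))
      -- the answer sets of side 1 at Φ are exactly I0
      have hM1 : (((ELP.mk A E {r}).union Q).eReduct Φ).AS = I0 := by
        rw [hAS1]
        ext J
        constructor
        · intro hJ
          exact AS_mem_F (F := I0) (fun t ht => Or.inr (Or.inr ht)) hJ
        · intro hJ
          exact mem_AS_I0 hI0A hJ hJ (fun t ht => absurd ht (Set.notMem_empty t))
            (hI0modr J hJ)
      -- I0 is a CWV of side 1
      have hCWV1 : ((ELP.mk A E {r}).union Q).isCWVwrt Φ I0 := by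
        refine ⟨fun ℓ hℓ => Or.inl (hΦE hℓ), hM1.symm, hI0comp.1, hI0comp.2.1, ?_⟩
        rintro ℓ ⟨(hℓE | hℓE), hℓΦ⟩ J hJ
        · exact hI0comp.2.2 ℓ ⟨hℓE, hℓΦ⟩ J hJ
        · exact hI0comp.2.2 ℓ ⟨hℓE, hℓΦ⟩ J hJ
      -- but I0 is not a CWV of side 2
      obtain ⟨Φ'', hΦ''E, hMAS'', hcomp''⟩ := (hstrong Q hQwf I0).1 ⟨Φ, hCWV1⟩
      by_cases hsub : Φ ⊆ Φ''
      · by_cases hsub2 : Φ'' ⊆ Φ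
        · -- Φ'' = Φ : contradiction with non-realizability of Φ in P2
          have hΦeq : Φ'' = Φ := Set.Subset.antisymm hsub2 hsub
          rw [hΦeq] at hMAS'' hcomp''
          apply hreal2
          have hR2' : (((ELP.mk A E {r}).union (ELP.mk A E {s})).eReduct Φ).R =
              sReduct r Φ ∪ sReduct s Φ := by
            rw [ELP.eReduct_union_R, eReduct_singleton_R, eReduct_singleton_R]
          refine realizable_transfer (E := E) (Φ := Φ) (E' := (E ∪ E) ∪ E)
            (Φ' := Φ) hEA (by simp [ELP.union]) (by simp [ELP.union]) hΦE
            (le_refl _) (fun ℓ h => Or.inl (Or.inl h)) (fun ℓ _ h => h) hcomp'' ?_ ?_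
          · intro J hJ t ht
            rw [hR2'] at ht
            have hJ2 := hMAS'' ▸ hJ
            exact hJ2.2.1 t ((hQR2 Φ).symm ▸ Or.inl ht)
          · intro t ht
            rw [hR2'] at ht
            rcases ht with ht | ht
            · exact sReduct_wf hEA hrwf Φ t ht
            · exact sReduct_wf hEA hswf Φ t ht
        · -- Φ'' ⊋ Φ : the fresh guessed literal has no witness
          obtain ⟨ℓ', hℓ'Φ'', hℓ'Φ⟩ := Set.not_subset.1 hsub2
          obtain ⟨J, hJ, hJns⟩ := hcomp''.2.1 ℓ' hℓ'Φ''
          have hℓ'E : ℓ' ∈ E := by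
            rcases hΦ''E hℓ'Φ'' with ((h | h) | h) <;> exact h
          exact hJns (hI0comp.2.2 ℓ' ⟨hℓ'E, hℓ'Φ⟩ J hJ)
      · -- Φ ⊄ Φ'' : killed by the guess-killer rules
        obtain ⟨ℓ0, hℓ0Φ, hℓ0Φ''⟩ := Set.not_subset.1 hsub
        obtain ⟨J, hJ⟩ := hcomp''.1
        have hℓ0sat : ℓ0.sat J := hcomp''.2.2 ℓ0 ⟨Or.inl (Or.inl (hΦE hℓ0Φ)), hℓ0Φ''⟩ J hJ
        exact hkill2 Φ'' ℓ0 hℓ0Φ hℓ0Φ'' J (hMAS'' ▸ hJ) hℓ0sat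
  · -- easy direction
    intro hSE Q hQwf M
    have hEE : ((E ∪ E) ∪ Q.E : Set (Lit V)) = E ∪ Q.E := by rw [Set.union_self]
    have hAA : ((A ∪ A) ∪ Q.A : Set V) = A ∪ Q.A := by rw [Set.union_self]
    -- rule-set computations
    have hR1 : ∀ Φ' : Set (Lit V), (((ELP.mk A E {r}).union Q).eReduct Φ').R =
        sReduct r (Φ' ∩ E) ∪ (Q.eReduct Φ').R := by
      intro Φ'
      rw [ELP.eReduct_union_R, eReduct_singleton_R,
        ← sReduct_inter hrwf.2.2.2.1 hrwf.2.2.2.2 Φ']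
    have hR2 : ∀ Φ' : Set (Lit V),
        ((((ELP.mk A E {r}).union (ELP.mk A E {s})).union Q).eReduct Φ').R =
        (sReduct r (Φ' ∩ E) ∪ sReduct s (Φ' ∩ E)) ∪ (Q.eReduct Φ').R := by
      intro Φ'
      rw [ELP.eReduct_union_R, ELP.eReduct_union_R, eReduct_singleton_R,
        eReduct_singleton_R, ← sReduct_inter hrwf.2.2.2.1 hrwf.2.2.2.2 Φ',
        ← sReduct_inter hswf.2.2.2.1 hswf.2.2.2.2 Φ']
    -- main AS-equality under compatibility
    have hASmain : ∀ (Φ' : Set (Lit V)) (M0 : Set (Set V)),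
        compatible (E ∪ Q.E) Φ' M0 →
        (∀ J ∈ M0, ((ELP.mk A E {r}).eReduct (Φ' ∩ E)).model J) →
        ((((ELP.mk A E {r}).union Q).eReduct Φ').AS =
          ((((ELP.mk A E {r}).union (ELP.mk A E {s})).union Q).eReduct Φ').AS) := by
      intro Φ' M0 hcompat hmods
      have hΦE : Φ' ∩ E ⊆ E := Set.inter_subset_right
      have hreal1 : (ELP.mk A E {r}).realizable (Φ' ∩ E) := by
        refine realizable_transfer hEA rfl rfl hΦE Set.inter_subset_left
          Set.subset_union_left (fun ℓ hℓE hℓΦ hin => hℓΦ ⟨hin, hℓE⟩) hcompat hmods ?_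
        rw [eReduct_singleton]
        exact sReduct_wf hEA hrwf (Φ' ∩ E)
      obtain ⟨hreals, hSEsub⟩ := SEfun_step hreal1 (hSE (Φ' ∩ E) hΦE)
      rw [eReduct_singleton, eReduct_singleton] at hSEsub
      have e1 : ((((ELP.mk A E {r}).union Q).eReduct Φ')).AS =
          (Program.mk (A ∪ Q.A) (sReduct r (Φ' ∩ E) ∪ (Q.eReduct Φ').R)).AS :=
        Program.AS_R_congr (hR1 Φ')
      have e2 : (((((ELP.mk A E {r}).union (ELP.mk A E {s})).union Q).eReduct Φ')).AS =
          (Program.mk ((A ∪ A) ∪ Q.A)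
            ((sReduct r (Φ' ∩ E) ∪ sReduct s (Φ' ∩ E)) ∪ (Q.eReduct Φ').R)).AS :=
        Program.AS_R_congr (hR2 Φ')
      rw [e1, e2, Program.AS_eq_of hAA rfl]
      exact AS_union_eq (sReduct_wf hEA hrwf _) (sReduct_wf hEA hswf _) hSEsub
    -- model extraction from answer sets
    have hmods1 : ∀ (Φ' : Set (Lit V)) J,
        J ∈ (((ELP.mk A E {r}).union Q).eReduct Φ').AS →
        ((ELP.mk A E {r}).eReduct (Φ' ∩ E)).model J := by
      intro Φ' J hJ t ht
      rw [eReduct_singleton] at ht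
      exact hJ.2.1 t ((hR1 Φ') ▸ Or.inl ht)
    have hmods2 : ∀ (Φ' : Set (Lit V)) J,
        J ∈ ((((ELP.mk A E {r}).union (ELP.mk A E {s})).union Q).eReduct Φ').AS →
        ((ELP.mk A E {r}).eReduct (Φ' ∩ E)).model J := by
      intro Φ' J hJ t ht
      rw [eReduct_singleton] at ht
      exact hJ.2.1 t ((hR2 Φ') ▸ Or.inl (Or.inl ht))
    constructor
    · rintro ⟨Φ', hΦ'E, hMAS, hcompat⟩
      have hc : compatible (E ∪ Q.E) Φ' M := hcompat
      have heq := hASmain Φ' M hc (fun J hJ => hmods1 Φ' J (hMAS ▸ hJ))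
      refine ⟨Φ', ?_, hMAS.trans heq, ?_⟩
      · show Φ' ⊆ (E ∪ E) ∪ Q.E
        rw [hEE]; exact hΦ'E
      · show compatible ((E ∪ E) ∪ Q.E) Φ' M
        rw [hEE]; exact hc
    · rintro ⟨Φ', hΦ'E, hMAS, hcompat⟩
      have hc : compatible (E ∪ Q.E) Φ' M := by
        have : compatible ((E ∪ E) ∪ Q.E) Φ' M := hcompat
        rwa [hEE] at this
      have heq := hASmain Φ' M hc (fun J hJ => hmods2 Φ' J (hMAS ▸ hJ))
      refine ⟨Φ', ?_, hMAS.trans heq.symm, hc⟩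
      have : Φ' ⊆ (E ∪ E) ∪ Q.E := hΦ'E
      rwa [hEE] at this
end

section
/- A standard rule r = A ← B, ¬C, ¬¬D subsumes a non-tautological standard rule s = A' ← B', ¬C', ¬¬D' if and only if the following conditions jointly hold: (α) A ⊆ A' ∪ C', (β) B ⊆ B' ∪ D', (β') if A ∩ (A'∖C') ≠ ∅ then B ⊆ B', (γ) C ⊆ C', and (δ) D ⊆ B' ∪ D'. -/
variable {V : Type}

namespace Stmt16Aux

variable {V : Type}

/-- The standard rule `A ← B, ¬C, ¬¬D`. -/
def std (A B C D : Set V) : Rule V := ⟨A, B, Lit.pos '' C ∪ Lit.neg '' D⟩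

lemma negpart {C D I : Set V} :
    (∀ ℓ ∈ (Lit.pos '' C ∪ Lit.neg '' D : Set (Lit V)), ¬ ℓ.sat I) ↔
      ((∀ c ∈ C, c ∉ I) ∧ ∀ d ∈ D, d ∈ I) := by
  constructor
  · intro h
    exact ⟨fun c hc => h _ (Or.inl ⟨c, hc, rfl⟩),
      fun d hd => not_not.mp (h _ (Or.inr ⟨d, hd, rfl⟩))⟩
  · rintro ⟨h1, h2⟩ ℓ (⟨c, hc, rfl⟩ | ⟨d, hd, rfl⟩)
    · exact h1 c hc
    · exact fun hn => hn (h2 d hd)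

lemma std_sat {A B C D I : Set V} :
    (std A B C D).sat I ↔ ((B ⊆ I ∧ (∀ c ∈ C, c ∉ I) ∧ D ⊆ I) → ∃ a ∈ A, a ∈ I) := by
  constructor
  · intro h ⟨h1, h2, h3⟩
    exact h ⟨h1, negpart.mpr ⟨h2, fun d hd => h3 hd⟩⟩
  · intro h ⟨h1, h2⟩
    obtain ⟨h2a, h2b⟩ := negpart.mp h2
    exact h ⟨h1, h2a, fun d hd => h2b d hd⟩

lemma std_red {A B C D Y X : Set V} :
    (std A B C D).redSat Y X ↔
      (((∀ c ∈ C, c ∉ Y) ∧ D ⊆ Y) → B ⊆ X → ∃ a ∈ A, a ∈ X) := by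
  constructor
  · intro h ⟨h1, h2⟩ hb
    exact h (negpart.mpr ⟨h1, fun d hd => h2 hd⟩) hb
  · intro h h2 hb
    obtain ⟨h2a, h2b⟩ := negpart.mp h2
    exact h ⟨h2a, fun d hd => h2b d hd⟩ hb

/-- Generic pointwise criterion for strong equivalence of `(𝒜,R₁)` and `(𝒜,R₂)`
with `R₁ ⊆ R₂`. -/
lemma strongEq_subset_of (𝒜 : Set V) (R₁ R₂ : Set (Rule V)) (h12 : R₁ ⊆ R₂)
    (hmod : ∀ I q, (∀ p ∈ R₁, Rule.sat I p) → q ∈ R₂ → Rule.sat I q)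
    (hred : ∀ X Y q, X ⊆ Y → (∀ p ∈ R₁, Rule.sat Y p) →
      (∀ p ∈ R₁, Rule.redSat Y X p) → q ∈ R₂ → Rule.redSat Y X q) :
    Program.strongEq ⟨𝒜, R₁⟩ ⟨𝒜, R₂⟩ := by
  intro P hP
  ext M
  simp only [Program.AS, Set.mem_setOf_eq, Program.answerSet, Program.union,
    Program.model, Program.redModel]
  constructor
  · rintro ⟨hMA, hMmod, hMmin⟩
    refine ⟨hMA, ?_, ?_⟩
    · rintro q (hq | hq)
      · exact hmod M q (fun p hp => hMmod p (Or.inl hp)) hq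
      · exact hMmod q (Or.inr hq)
    · rintro ⟨M', hss, hred'⟩
      refine hMmin ⟨M', hss, ?_⟩
      rintro q (hq | hq)
      · exact hred' q (Or.inl (h12 hq))
      · exact hred' q (Or.inr hq)
  · rintro ⟨hMA, hMmod, hMmin⟩
    refine ⟨hMA, ?_, ?_⟩
    · rintro q (hq | hq)
      · exact hMmod q (Or.inl (h12 hq))
      · exact hMmod q (Or.inr hq)
    · rintro ⟨M', hss, hred'⟩
      refine hMmin ⟨M', hss, ?_⟩
      rintro q (hq | hq)
      · exact hred M' M q hss.subset (fun p hp => hMmod p (Or.inl (h12 hp)))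
          (fun p hp => hred' p (Or.inl hp)) hq
      · exact hred' q (Or.inr hq)

lemma strongEq_symm {P Q : Program V} (h : Program.strongEq P Q) :
    Program.strongEq Q P := fun P' hw => (h P' hw).symm

/-- If one of the three "tautology" overlaps is nonempty, the singleton program is
strongly equivalent to the empty one. -/
lemma taut_strongEq (𝒜 A' B' C' D' : Set V)
    (h : (A' ∩ B').Nonempty ∨ (B' ∩ C').Nonempty ∨ (C' ∩ D').Nonempty) :
    Program.strongEq (⟨𝒜, {std A' B' C' D'}⟩ : Program V) ⟨𝒜, ∅⟩ := by
  apply strongEq_symm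
  apply strongEq_subset_of 𝒜 ∅ {std A' B' C' D'} (Set.empty_subset _)
  · rintro I q - hq
    rw [Set.mem_singleton_iff] at hq; subst hq
    rw [std_sat]
    rintro ⟨hB, hCn, hD⟩
    rcases h with ⟨a, haA, haB⟩ | ⟨c, hcB, hcC⟩ | ⟨c, hcC, hcD⟩
    · exact ⟨a, haA, hB haB⟩
    · exact absurd (hB hcB) (hCn c hcC)
    · exact absurd (hD hcD) (hCn c hcC)
  · rintro X Y q hXY - - hq
    rw [Set.mem_singleton_iff] at hq; subst hq
    rw [std_red]
    rintro ⟨hCn, hD⟩ hB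
    rcases h with ⟨a, haA, haB⟩ | ⟨c, hcB, hcC⟩ | ⟨c, hcC, hcD⟩
    · exact ⟨a, haA, hB haB⟩
    · exact absurd (hXY (hB hcB)) (hCn c hcC)
    · exact absurd (hD hcD) (hCn c hcC)

/-- A fact rule `y ←`. -/
def fact (y : V) : Rule V := ⟨{y}, ∅, ∅⟩

lemma fact_redSat {Y M' : Set V} {y : V} (h : (fact y).redSat Y M') : y ∈ M' := by
  obtain ⟨a, ha, haM⟩ := h (fun ℓ hℓ => absurd hℓ (Set.notMem_empty ℓ)) (Set.empty_subset _)
  exact ha ▸ haM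

lemma fact_sat {I : Set V} {y : V} (h : y ∈ I) : (fact y).sat I :=
  fun _ => ⟨y, rfl, h⟩

/-- Key necessity lemma: subsumption (as strong equivalence) yields SE-model
inclusion pointwise. -/
lemma se_incl (𝒜 : Set V) (r s : Rule V)
    (h : Program.strongEq (⟨𝒜, {r}⟩ : Program V) ⟨𝒜, {r, s}⟩)
    (X Y : Set V) (hXY : X ⊆ Y) (hY : Y ⊆ 𝒜)
    (hrY : r.sat Y) (hrXY : r.redSat Y X) :
    s.sat Y ∧ s.redSat Y X := by
  have hsY : s.sat Y := by
    by_contra hsY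
    -- context: facts y ← for y ∈ Y
    set P₁ : Program V := ⟨𝒜, {q | ∃ y ∈ Y, q = fact y}⟩ with hP₁
    have hwf : P₁.wf := by
      rintro q ⟨y, hy, rfl⟩
      exact ⟨Set.singleton_subset_iff.mpr (hY hy), Set.empty_subset _,
        fun ℓ hℓ => absurd hℓ (Set.notMem_empty ℓ)⟩
    have heq := h P₁ hwf
    have hY1 : Y ∈ (Program.union ⟨𝒜, {r}⟩ P₁).AS := by
      refine ⟨fun a ha => Or.inl (hY ha), ?_, ?_⟩
      · rintro q (hq | ⟨y, hy, rfl⟩)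
        · rw [Set.mem_singleton_iff] at hq; subst hq; exact hrY
        · exact fact_sat hy
      · rintro ⟨M', hss, hrm⟩
        exact hss.not_subset fun y hy => fact_redSat (hrm _ (Or.inr ⟨y, hy, rfl⟩))
    rw [heq] at hY1
    exact hsY (hY1.2.1 s (Or.inl (Or.inr rfl)))
  refine ⟨hsY, ?_⟩
  by_contra hns
  have hXNeY : X ≠ Y := by
    rintro rfl
    exact hns fun hneg hpos => hsY ⟨hpos, hneg⟩
  -- context: facts x ← for x ∈ X, plus u ← v for u, v ∈ Y \ X
  set P₂ : Program V :=
    ⟨𝒜, {q | ∃ x ∈ X, q = fact x} ∪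
        {q | ∃ u ∈ Y \ X, ∃ v ∈ Y \ X, q = ⟨{u}, {v}, ∅⟩}⟩ with hP₂
  have hwf : P₂.wf := by
    rintro q (⟨x, hx, rfl⟩ | ⟨u, hu, v, hv, rfl⟩)
    · exact ⟨Set.singleton_subset_iff.mpr (hY (hXY hx)), Set.empty_subset _,
        fun ℓ hℓ => absurd hℓ (Set.notMem_empty ℓ)⟩
    · exact ⟨Set.singleton_subset_iff.mpr (hY hu.1),
        Set.singleton_subset_iff.mpr (hY hv.1),
        fun ℓ hℓ => absurd hℓ (Set.notMem_empty ℓ)⟩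
  have heq := h P₂ hwf
  have hY2 : Y ∈ (Program.union ⟨𝒜, {r, s}⟩ P₂).AS := by
    refine ⟨fun a ha => Or.inl (hY ha), ?_, ?_⟩
    · rintro q (hq | (⟨x, hx, rfl⟩ | ⟨u, hu, v, hv, rfl⟩))
      · rcases hq with rfl | hq
        · exact hrY
        · rw [Set.mem_singleton_iff] at hq; subst hq; exact hsY
      · exact fact_sat (hXY hx)
      · exact fun _ => ⟨u, rfl, hu.1⟩
    · rintro ⟨M', hss, hrm⟩
      have hXM' : X ⊆ M' := fun x hx => fact_redSat (hrm _ (Or.inr (Or.inl ⟨x, hx, rfl⟩)))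
      have hMeq : M' = X := by
        apply Set.Subset.antisymm _ hXM'
        intro m hm
        by_contra hmX
        have hmYX : m ∈ Y \ X := ⟨hss.subset hm, hmX⟩
        have : Y ⊆ M' := by
          intro u hu
          by_cases huX : u ∈ X
          · exact hXM' huX
          · obtain ⟨a, ha, haM⟩ :=
              hrm _ (Or.inr (Or.inr ⟨u, ⟨hu, huX⟩, m, hmYX, rfl⟩))
                (fun ℓ hℓ => absurd hℓ (Set.notMem_empty ℓ))
                (Set.singleton_subset_iff.mpr hm)
            exact ha ▸ haM
        exact hss.not_subset this
      exact hns (hMeq ▸ hrm s (Or.inl (Or.inr rfl)))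
  rw [← heq] at hY2
  refine hY2.2.2 ⟨X, HasSubset.Subset.ssubset_of_ne hXY hXNeY, ?_⟩
  rintro q (hq | (⟨x, hx, rfl⟩ | ⟨u, hu, v, hv, rfl⟩))
  · rw [Set.mem_singleton_iff] at hq; subst hq; exact hrXY
  · exact fun _ _ => ⟨x, rfl, hx⟩
  · intro _ hv'
    exact absurd (hv' rfl) hv.2

end Stmt16Aux

/-- A standard rule `r = A ← B, ¬C, ¬¬D` subsumes a non-tautological
standard rule `s = A' ← B', ¬C', ¬¬D'` iff (α) `A ⊆ A' ∪ C'`, (β) `B ⊆ B' ∪ D'`,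
(β') `A ∩ (A'∖C') ≠ ∅ → B ⊆ B'`, (γ) `C ⊆ C'`, and (δ) `D ⊆ B' ∪ D'`. -/
theorem stmt16 {V : Type} (𝒜 A B C D A' B' C' D' : Set V)
    (hA : A ⊆ 𝒜) (hB : B ⊆ 𝒜) (hC : C ⊆ 𝒜) (hD : D ⊆ 𝒜)
    (hA' : A' ⊆ 𝒜) (hB' : B' ⊆ 𝒜) (hC' : C' ⊆ 𝒜) (hD' : D' ⊆ 𝒜)
    (hs : ¬ Program.strongEq
        (Program.mk 𝒜 {Rule.mk A' B' (Lit.pos '' C' ∪ Lit.neg '' D')})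
        (Program.mk 𝒜 ∅)) :
    Program.strongEq
        (Program.mk 𝒜 {Rule.mk A B (Lit.pos '' C ∪ Lit.neg '' D)})
        (Program.mk 𝒜 ({Rule.mk A B (Lit.pos '' C ∪ Lit.neg '' D),
          Rule.mk A' B' (Lit.pos '' C' ∪ Lit.neg '' D')})) ↔
      (A ⊆ A' ∪ C' ∧ B ⊆ B' ∪ D' ∧ ((A ∩ (A' \ C')).Nonempty → B ⊆ B') ∧
        C ⊆ C' ∧ D ⊆ B' ∪ D') := by
  classical
  open Stmt16Aux in
  have hA'B' : ∀ a, a ∈ A' → a ∈ B' → False := fun a h1 h2 =>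
    hs (taut_strongEq 𝒜 A' B' C' D' (Or.inl ⟨a, h1, h2⟩))
  have hB'C' : ∀ a, a ∈ B' → a ∈ C' → False := fun a h1 h2 =>
    hs (taut_strongEq 𝒜 A' B' C' D' (Or.inr (Or.inl ⟨a, h1, h2⟩)))
  have hC'D' : ∀ a, a ∈ C' → a ∈ D' → False := fun a h1 h2 =>
    hs (taut_strongEq 𝒜 A' B' C' D' (Or.inr (Or.inr ⟨a, h1, h2⟩)))
  have hCnY : ∀ a : V, a ∉ A' ∪ C' ∨ a ∉ C' → ∀ c ∈ C', c ∉ insert a (B' ∪ D') := by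
    rintro a ha c hcC' (rfl | hc | hc)
    · rcases ha with ha | ha
      · exact ha (Or.inr hcC')
      · exact ha hcC'
    · exact hB'C' c hc hcC'
    · exact hC'D' c hcC' hc
  have hCnY' : ∀ c ∈ C', c ∉ B' ∪ D' := by
    rintro c hcC' (hc | hc)
    · exact hB'C' c hc hcC'
    · exact hC'D' c hcC' hc
  constructor
  · intro hsub
    have se := se_incl 𝒜 (std A B C D) (std A' B' C' D') hsub
    refine ⟨?_, ?_, ?_, ?_, ?_⟩
    · -- α
      intro a haA
      by_contra ha
      obtain ⟨-, hsred⟩ := se (insert a B') (insert a (B' ∪ D'))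
        (Set.insert_subset_insert Set.subset_union_left)
        (Set.insert_subset (hA haA) (Set.union_subset hB' hD'))
        (std_sat.mpr fun _ => ⟨a, haA, Set.mem_insert _ _⟩)
        (std_red.mpr fun _ _ => ⟨a, haA, Set.mem_insert _ _⟩)
      obtain ⟨a', ha'A, ha'X⟩ := std_red.mp hsred
        ⟨hCnY a (Or.inl ha), fun d hd => Or.inr (Or.inr hd)⟩
        (Set.subset_insert _ _)
      rcases ha'X with rfl | ha'X
      · exact ha (Or.inl ha'A)
      · exact hA'B' a' ha'A ha'X
    · -- β
      intro b hbB
      by_contra hb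
      obtain ⟨-, hsred⟩ := se B' (B' ∪ D') Set.subset_union_left
        (Set.union_subset hB' hD')
        (std_sat.mpr fun hbody => absurd (hbody.1 hbB) hb)
        (std_red.mpr fun _ hBX => absurd (Or.inl (hBX hbB) : b ∈ B' ∪ D') hb)
      obtain ⟨a', ha'A, ha'X⟩ := std_red.mp hsred
        ⟨hCnY', fun d hd => Or.inr hd⟩ subset_rfl
      exact hA'B' a' ha'A ha'X
    · -- β'
      rintro ⟨a, haA, haA', haC'⟩ b hbB
      by_contra hbB'
      obtain ⟨-, hsred⟩ := se B' (insert a (B' ∪ D'))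
        ((Set.subset_union_left).trans (Set.subset_insert _ _))
        (Set.insert_subset (hA haA) (Set.union_subset hB' hD'))
        (std_sat.mpr fun _ => ⟨a, haA, Set.mem_insert _ _⟩)
        (std_red.mpr fun _ hBX => absurd (hBX hbB) hbB')
      obtain ⟨a', ha'A, ha'X⟩ := std_red.mp hsred
        ⟨hCnY a (Or.inr haC'), fun d hd => Or.inr (Or.inr hd)⟩ subset_rfl
      exact hA'B' a' ha'A ha'X
    · -- γ
      intro c hcC
      by_contra hc
      obtain ⟨-, hsred⟩ := se B' (insert c (B' ∪ D'))
        ((Set.subset_union_left).trans (Set.subset_insert _ _))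
        (Set.insert_subset (hC hcC) (Set.union_subset hB' hD'))
        (std_sat.mpr fun hbody =>
          absurd (Set.mem_insert _ _) (hbody.2.1 c hcC))
        (std_red.mpr fun hbody _ =>
          absurd (Set.mem_insert _ _) (hbody.1 c hcC))
      obtain ⟨a', ha'A, ha'X⟩ := std_red.mp hsred
        ⟨hCnY c (Or.inr hc), fun d hd => Or.inr (Or.inr hd)⟩ subset_rfl
      exact hA'B' a' ha'A ha'X
    · -- δ
      intro d hdD
      by_contra hd
      obtain ⟨-, hsred⟩ := se B' (B' ∪ D') Set.subset_union_left
        (Set.union_subset hB' hD')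
        (std_sat.mpr fun hbody => absurd (hbody.2.2 hdD) hd)
        (std_red.mpr fun hbody _ => absurd (hbody.2 hdD) hd)
      obtain ⟨a', ha'A, ha'X⟩ := std_red.mp hsred
        ⟨hCnY', fun d hd => Or.inr hd⟩ subset_rfl
      exact hA'B' a' ha'A ha'X
  · rintro ⟨hα, hβ, hβ', hγ, hδ⟩
    apply strongEq_subset_of 𝒜 {std A B C D} {std A B C D, std A' B' C' D'}
      (fun q hq => Or.inl hq)
    · intro I q hR₁ hq
      rw [Set.mem_insert_iff] at hq
      rcases hq with rfl | hq
      · exact hR₁ _ rfl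
      · rw [Set.mem_singleton_iff] at hq
        subst hq
        have hr := std_sat.mp (hR₁ _ rfl)
        rw [std_sat]
        rintro ⟨hB'I, hC'n, hD'I⟩
        obtain ⟨a, haA, haI⟩ := hr
          ⟨fun b hb => (hβ hb).elim (fun h => hB'I h) (fun h => hD'I h),
           fun c hc => hC'n c (hγ hc),
           fun d hd => (hδ hd).elim (fun h => hB'I h) (fun h => hD'I h)⟩
        rcases hα haA with h | h
        · exact ⟨a, h, haI⟩
        · exact absurd haI (hC'n a h)
    · intro X Y q hXY hsatR hredR hq
      rw [Set.mem_insert_iff] at hq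
      rcases hq with rfl | hq
      · exact hredR _ rfl
      · rw [Set.mem_singleton_iff] at hq
        subst hq
        have hrY := std_sat.mp (hsatR _ rfl)
        have hrXY := std_red.mp (hredR _ rfl)
        rw [std_red]
        rintro ⟨hC'Y, hD'Y⟩ hB'X
        have hCY : ∀ c ∈ C, c ∉ Y := fun c hc => hC'Y c (hγ hc)
        have hDY : D ⊆ Y := fun d hd =>
          (hδ hd).elim (fun h => hXY (hB'X h)) (fun h => hD'Y h)
        by_cases hBX : B ⊆ X
        · obtain ⟨a, haA, haX⟩ := hrXY ⟨hCY, hDY⟩ hBX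
          rcases hα haA with h | h
          · exact ⟨a, h, haX⟩
          · exact absurd (hXY haX) (hC'Y a h)
        · have hBY : B ⊆ Y := fun b hb =>
            (hβ hb).elim (fun h => hXY (hB'X h)) (fun h => hD'Y h)
          obtain ⟨a, haA, haY⟩ := hrY ⟨hBY, hCY, hDY⟩
          have haA' : a ∈ A' := (hα haA).resolve_right fun h => hC'Y a h haY
          exact absurd
            (fun b hb => hB'X (hβ' ⟨a, haA, haA', fun h => hC'Y a h haY⟩ hb)) hBX
end
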